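/- arXiv:1209.2202 — 13 statements merged into one kernel-verified Lean document; each statement's English description precedes it below -/
import Mathlib

section
/- For every finite simple graph G of order n, χ₂(G) + χ₂(Ḡ) ≤ n + 1. -/
open SimpleGraph

/-- The graph on the vertices of `G` where two vertices are adjacent
iff their distance in `G` is exactly 2. -/
def distTwoGraph {V : Type*} (G : SimpleGraph V) : SimpleGraph V where
  Adj u v := G.dist u v = 2
  symm := by
    constructor
    intro u v h
    rwa [SimpleGraph.dist_comm]
  loopless := by
    constructor
    intro v h
    simp [SimpleGraph.dist_self] at h

/-- The 2-proper chromatic number of `G`. -/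
noncomputable def chi2 {V : Type*} (G : SimpleGraph V) : ℕ∞ :=
  (distTwoGraph G).chromaticNumber

/-- Greedy extension step: given a partial coloring `f` of `s` with colors `< a`,
there is a color for a new vertex `v` avoiding the colors of its `G`-neighbors in `s`,
where the color bound grows only if `v` has at least `a` neighbors in `s`. -/
lemma exists_color {V : Type*} [DecidableEq V] (G : SimpleGraph V) [DecidableRel G.Adj]
    (f : V → ℕ) (a : ℕ) (s : Finset V) (v : V)
    (hlt : ∀ u ∈ s, f u < a) :
    ∃ c, c < (if (s.filter (G.Adj v)).card < a then a else a + 1) ∧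
      ∀ u ∈ s, G.Adj v u → f u ≠ c := by
  by_cases hd : (s.filter (G.Adj v)).card < a
  · have hcard : ((s.filter (G.Adj v)).image f).card < (Finset.range a).card := by
      calc ((s.filter (G.Adj v)).image f).card ≤ (s.filter (G.Adj v)).card :=
            Finset.card_image_le
        _ < a := hd
        _ = (Finset.range a).card := (Finset.card_range a).symm
    have hne : (Finset.range a \ (s.filter (G.Adj v)).image f).Nonempty := by
      rw [Finset.sdiff_nonempty]
      intro hsub
      exact absurd (Finset.card_le_card hsub) (not_le.mpr hcard)
    obtain ⟨c, hc⟩ := hne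
    rw [Finset.mem_sdiff, Finset.mem_range] at hc
    refine ⟨c, by simp [hd, hc.1], fun u hu hadj hfu => hc.2 ?_⟩
    exact Finset.mem_image.mpr ⟨u, Finset.mem_filter.mpr ⟨hu, hadj⟩, hfu⟩
  · refine ⟨a, by simp [hd], fun u hu _ hfu => ?_⟩
    exact absurd hfu (Nat.ne_of_lt (hlt u hu))

/-- Extending a proper partial coloring by one vertex. -/
lemma update_proper {V : Type*} [DecidableEq V] (G : SimpleGraph V)
    (f : V → ℕ) (s : Finset V) (v : V) (c : ℕ)
    (hf : ∀ u ∈ s, ∀ w ∈ s, G.Adj u w → f u ≠ f w)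
    (havoid : ∀ u ∈ s, G.Adj v u → f u ≠ c) :
    ∀ u ∈ insert v s, ∀ w ∈ insert v s, G.Adj u w →
      Function.update f v c u ≠ Function.update f v c w := by
  intro u hu w hw hadj
  by_cases huv : u = v
  · by_cases hwv : w = v
    · rw [huv, hwv] at hadj
      exact absurd hadj (G.loopless.irrefl v)
    · have hw' : w ∈ s := (Finset.mem_insert.mp hw).resolve_left hwv
      rw [huv] at hadj ⊢
      rw [Function.update_self, Function.update_of_ne hwv]
      exact fun h => havoid w hw' hadj h.symm
  · have hu' : u ∈ s := (Finset.mem_insert.mp hu).resolve_left huv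
    rw [Function.update_of_ne huv]
    by_cases hwv : w = v
    · rw [hwv] at hadj ⊢
      rw [Function.update_self]
      exact havoid u hu' (G.symm.symm _ _ hadj)
    · have hw' : w ∈ s := (Finset.mem_insert.mp hw).resolve_left hwv
      rw [Function.update_of_ne hwv]
      exact hf u hu' w hw' hadj

/-- Nordhaus–Gaddum style statement on a finite subset of vertices. -/
lemma ng_aux {V : Type*} [DecidableEq V] (G : SimpleGraph V) [DecidableRel G.Adj]
    (s : Finset V) :
    ∃ (f g : V → ℕ) (a b : ℕ),
      (∀ u ∈ s, f u < a) ∧ (∀ u ∈ s, g u < b) ∧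
      (∀ u ∈ s, ∀ w ∈ s, G.Adj u w → f u ≠ f w) ∧
      (∀ u ∈ s, ∀ w ∈ s, Gᶜ.Adj u w → g u ≠ g w) ∧
      a + b ≤ s.card + 1 := by
  classical
  induction s using Finset.induction with
  | empty =>
      exact ⟨fun _ => 0, fun _ => 0, 0, 1, by simp, by simp, by simp, by simp, by simp⟩
  | @insert v s hv ih =>
      obtain ⟨f, g, a, b, hfa, hgb, hf, hg, hab⟩ := ih
      set d := (s.filter (G.Adj v)).card with hd_def
      set e := (s.filter (Gᶜ.Adj v)).card with he_def
      have hde : d + e = s.card := by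
        have hfe : s.filter (Gᶜ.Adj v) = s.filter (fun u => ¬ G.Adj v u) := by
          apply Finset.filter_congr
          intro u hu
          simp only [compl_adj]
          constructor
          · rintro ⟨_, h2⟩; exact h2
          · intro h
            exact ⟨fun hvu => hv (hvu ▸ hu), h⟩
        rw [hd_def, he_def, hfe, Finset.card_filter_add_card_filter_not]
      obtain ⟨c, hc, hcavoid⟩ := exists_color G f a s v hfa
      obtain ⟨c', hc', hcavoid'⟩ := exists_color Gᶜ g b s v hgb
      set a' := if d < a then a else a + 1 with ha'_def
      set b' := if e < b then b else b + 1 with hb'_def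
      refine ⟨Function.update f v c, Function.update g v c', a', b', ?_, ?_,
        update_proper G f s v c hf hcavoid, update_proper Gᶜ g s v c' hg hcavoid', ?_⟩
      · intro u hu
        by_cases huv : u = v
        · subst huv; simpa [Function.update_self] using hc
        · rw [Function.update_of_ne huv]
          exact lt_of_lt_of_le (hfa u ((Finset.mem_insert.mp hu).resolve_left huv))
            (by rw [ha'_def]; split <;> omega)
      · intro u hu
        by_cases huv : u = v
        · subst huv; simpa [Function.update_self] using hc'
        · rw [Function.update_of_ne huv]
          exact lt_of_lt_of_le (hgb u ((Finset.mem_insert.mp hu).resolve_left huv))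
            (by rw [hb'_def]; split <;> omega)
      · rw [Finset.card_insert_of_notMem hv, ha'_def, hb'_def]
        by_cases h1 : d < a <;> by_cases h2 : e < b <;> simp [h1, h2] <;> omega

/-- Nordhaus–Gaddum upper bound, `Colorable` form. -/
lemma ng {V : Type*} [Fintype V] (G : SimpleGraph V) :
    ∃ a b : ℕ, G.Colorable a ∧ Gᶜ.Colorable b ∧ a + b ≤ Fintype.card V + 1 := by
  classical
  obtain ⟨f, g, a, b, hfa, hgb, hf, hg, hab⟩ := ng_aux G Finset.univ
  refine ⟨a, b, ?_, ?_, by simpa using hab⟩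
  · rw [G.colorable_iff_exists_bdd_nat_coloring]
    exact ⟨Coloring.mk f (fun {u w} h => hf u (Finset.mem_univ u) w (Finset.mem_univ w) h),
      fun u => hfa u (Finset.mem_univ u)⟩
  · rw [Gᶜ.colorable_iff_exists_bdd_nat_coloring]
    exact ⟨Coloring.mk g (fun {u w} h => hg u (Finset.mem_univ u) w (Finset.mem_univ w) h),
      fun u => hgb u (Finset.mem_univ u)⟩

lemma distTwoGraph_le_compl {V : Type*} (G : SimpleGraph V) : distTwoGraph G ≤ Gᶜ := by
  intro u v h
  have h2 : G.dist u v = 2 := h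
  refine ⟨fun he => by simp [he, SimpleGraph.dist_self] at h2, fun hadj => ?_⟩
  rw [dist_eq_one_iff_adj.mpr hadj] at h2
  exact absurd h2 (by norm_num)

theorem chi2_add_chi2_compl_le {V : Type*} [Fintype V] (G : SimpleGraph V) :
    chi2 G + chi2 Gᶜ ≤ (Fintype.card V : ℕ∞) + 1 := by
  obtain ⟨a, b, hGa, hGcb, hab⟩ := ng G
  have h1 : chi2 G ≤ (b : ℕ∞) :=
    (Colorable.mono_left (distTwoGraph_le_compl G) hGcb).chromaticNumber_le
  have h2 : chi2 Gᶜ ≤ (a : ℕ∞) := by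
    have hle : distTwoGraph Gᶜ ≤ G := by
      have := distTwoGraph_le_compl Gᶜ
      rwa [compl_compl] at this
    exact (Colorable.mono_left hle hGa).chromaticNumber_le
  calc chi2 G + chi2 Gᶜ ≤ (b : ℕ∞) + (a : ℕ∞) := add_le_add h1 h2
    _ = ((b + a : ℕ) : ℕ∞) := by push_cast; ring
    _ ≤ ((Fintype.card V + 1 : ℕ) : ℕ∞) := by exact_mod_cast (by omega : b + a ≤ Fintype.card V + 1)
    _ = (Fintype.card V : ℕ∞) + 1 := by push_cast; ring
end

section
/- For every finite simple graph G of order n, 4 · χ₂(G) · χ₂(Ḡ) ≤ (n + 1)², i.e. χ₂(G)·χ₂(Ḡ) ≤ ((n+1)/2)². -/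
open SimpleGraph

section Aux

/-- Extend a coloring of `H - v` using `a` colors to `H`, provided `v` has degree `< a`. -/
lemma colorable_extend {V : Type*} [Fintype V] [DecidableEq V] (H : SimpleGraph V)
    [DecidableRel H.Adj] (v : V) {a : ℕ} (C : (H.induce {w | w ≠ v}).Coloring (Fin a))
    (hdeg : H.degree v < a) : H.Colorable a := by
  classical
  set img : Finset (Fin a) :=
    (H.neighborFinset v).attach.image
      (fun w => C ⟨w.1, (H.ne_of_adj ((H.mem_neighborFinset v w.1).mp w.2)).symm⟩) with himg
  have hcard : img.card < a := by
    calc img.card ≤ (H.neighborFinset v).attach.card := Finset.card_image_le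
    _ = H.degree v := Finset.card_attach
    _ < a := hdeg
  have hpos : 0 < imgᶜ.card := by
    rw [Finset.card_compl, Fintype.card_fin]; omega
  obtain ⟨c, hc⟩ := Finset.card_pos.mp hpos
  have hcnot : c ∉ img := Finset.mem_compl.mp hc
  refine ⟨Coloring.mk (fun w => if h : w = v then c else C ⟨w, h⟩) ?_⟩
  intro u w hadj
  beta_reduce
  by_cases hu : u = v
  · have hw : w ≠ v := by rintro rfl; exact H.ne_of_adj hadj hu
    rw [dif_pos hu, dif_neg hw]
    intro hEq
    apply hcnot
    rw [himg]
    apply Finset.mem_image.mpr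
    refine ⟨⟨w, (H.mem_neighborFinset v w).mpr (hu ▸ hadj)⟩, Finset.mem_attach _ _, ?_⟩
    exact hEq.symm
  · by_cases hw : w = v
    · rw [dif_neg hu, dif_pos hw]
      intro hEq
      apply hcnot
      rw [himg]
      apply Finset.mem_image.mpr
      refine ⟨⟨u, (H.mem_neighborFinset v u).mpr (hw ▸ hadj.symm)⟩, Finset.mem_attach _ _, ?_⟩
      exact hEq
    · rw [dif_neg hu, dif_neg hw]
      exact @Coloring.valid _ _ _ C ⟨u, hu⟩ ⟨w, hw⟩ hadj

/-- Any graph is `(a+1)`-colorable if deleting one vertex is `a`-colorable. -/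
lemma colorable_step {V : Type*} (H : SimpleGraph V) (v : V) {a : ℕ}
    (C : (H.induce {w | w ≠ v}).Coloring (Fin a)) : H.Colorable (a + 1) := by
  classical
  refine ⟨Coloring.mk
    (fun w => if h : w = v then Fin.last a else (C ⟨w, h⟩).castSucc) ?_⟩
  intro u w hadj
  beta_reduce
  by_cases hu : u = v
  · have hw : w ≠ v := by rintro rfl; exact H.ne_of_adj hadj hu
    rw [dif_pos hu, dif_neg hw]
    exact fun hEq => absurd hEq.symm (Fin.castSucc_lt_last _).ne
  · by_cases hw : w = v
    · rw [dif_neg hu, dif_pos hw]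
      exact (Fin.castSucc_lt_last _).ne
    · rw [dif_neg hu, dif_neg hw]
      exact fun hEq => @Coloring.valid _ _ _ C ⟨u, hu⟩ ⟨w, hw⟩ hadj (Fin.castSucc_injective _ hEq)

lemma induce_compl_eq {V : Type*} (G : SimpleGraph V) (s : Set V) :
    (G.induce s)ᶜ = Gᶜ.induce s := by
  ext ⟨u, hu⟩ ⟨w, hw⟩
  simp [compl_adj, Subtype.ext_iff]

/-- Nordhaus–Gaddum upper bound. -/
lemma nordhaus_gaddum (n : ℕ) : ∀ (V : Type*) [Fintype V] (G : SimpleGraph V),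
    Fintype.card V = n → ∃ a b : ℕ, G.Colorable a ∧ Gᶜ.Colorable b ∧ a + b ≤ n + 1 := by
  induction n with
  | zero =>
    intro V _ G hc
    haveI : IsEmpty V := Fintype.card_eq_zero_iff.mp hc
    exact ⟨0, 0, Colorable.of_isEmpty (G := G) 0, Colorable.of_isEmpty (G := Gᶜ) 0, by omega⟩
  | succ n ih =>
    intro V _ G hc
    classical
    haveI : Nonempty V := Fintype.card_pos_iff.mp (by omega)
    obtain ⟨v⟩ := ‹Nonempty V›
    set s : Set V := {w | w ≠ v} with hs
    have hcard : Fintype.card s = n := by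
      have : Fintype.card {w // ¬ w = v} = Fintype.card V - Fintype.card {w // w = v} :=
        Fintype.card_subtype_compl _
      rw [Fintype.card_subtype_eq] at this
      have hss : Fintype.card s = Fintype.card {w // ¬ w = v} := by
        apply Fintype.card_congr
        exact Equiv.subtypeEquivRight (fun w => Iff.rfl)
      omega
    obtain ⟨a, b, ⟨C₁⟩, hb, hab⟩ := ih s (G.induce s) hcard
    rw [induce_compl_eq] at hb
    obtain ⟨C₂⟩ := hb
    by_cases h1 : G.degree v < a
    · exact ⟨a, b + 1, colorable_extend G v C₁ h1, colorable_step Gᶜ v C₂, by omega⟩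
    · by_cases h2 : Gᶜ.degree v < b
      · exact ⟨a + 1, b, colorable_step G v C₁, colorable_extend Gᶜ v C₂ h2, by omega⟩
      · have hdc : Gᶜ.degree v = Fintype.card V - 1 - G.degree v := degree_compl G v
        have hlt : G.degree v < Fintype.card V := G.degree_lt_card_verts v
        have : a + b ≤ n := by omega
        exact ⟨a + 1, b + 1, colorable_step G v C₁, colorable_step Gᶜ v C₂, by omega⟩

end Aux

theorem four_mul_chi2_mul_chi2_compl_le {V : Type*} [Fintype V] (G : SimpleGraph V) :
    4 * (chi2 G * chi2 Gᶜ) ≤ ((Fintype.card V : ℕ∞) + 1) ^ 2 := by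
  obtain ⟨a, b, hca, hcb, hab⟩ := nordhaus_gaddum (Fintype.card V) V G rfl
  have h1 : chi2 G ≤ (b : ℕ∞) := by
    refine le_trans (chromaticNumber_mono (G := distTwoGraph G) Gᶜ (distTwoGraph_le_compl G)) ?_
    exact hcb.chromaticNumber_le
  have h2 : chi2 Gᶜ ≤ (a : ℕ∞) := by
    have hle : distTwoGraph Gᶜ ≤ G := by
      have := distTwoGraph_le_compl Gᶜ
      rwa [compl_compl] at this
    refine le_trans (chromaticNumber_mono (G := distTwoGraph Gᶜ) G hle) ?_
    exact hca.chromaticNumber_le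
  calc 4 * (chi2 G * chi2 Gᶜ) ≤ 4 * ((b : ℕ∞) * (a : ℕ∞)) := by
        exact mul_le_mul' le_rfl (mul_le_mul' h1 h2)
    _ = ((4 * b * a : ℕ) : ℕ∞) := by push_cast; ring
    _ ≤ (((Fintype.card V + 1) ^ 2 : ℕ) : ℕ∞) := by
        rw [Nat.cast_le]
        calc 4 * b * a ≤ (a + b) ^ 2 := by nlinarith [two_mul_le_add_sq a b]
        _ ≤ (Fintype.card V + 1) ^ 2 := Nat.pow_le_pow_left hab 2
    _ = ((Fintype.card V : ℕ∞) + 1) ^ 2 := by push_cast; ring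
end

section
/- For every integer n ≥ 13 there exists a finite simple graph G of order n such that χ₂(G) + χ₂(Ḡ) = n + 1. -/
open SimpleGraph

/-- auxiliary incidence pattern -/
def Mrel (r b : ℕ) : Prop :=
  (b + 6 - r) % 6 = 0 ∨ (b + 6 - r) % 6 = 1 ∨ (b + 6 - r) % 6 = 3

instance : DecidablePred (fun p : ℕ × ℕ => Mrel p.1 p.2) := fun _ => by unfold Mrel; infer_instance
instance (r b : ℕ) : Decidable (Mrel r b) := by unfold Mrel; infer_instance

lemma fact1 : ∀ b c : Fin 6, ∃ r : Fin 6, Mrel r b ∧ Mrel r c := by decide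
lemma fact2 : ∀ r s : Fin 6, ∃ b : Fin 6, ¬ Mrel r b ∧ ¬ Mrel s b := by decide
lemma fact3 : ∀ b : Fin 6, ¬ Mrel ((b + 4) % 6) b := by decide

def rowOf (a : ℕ) : ℕ := if a ≤ 6 then a - 1 else 0

lemma rowOf_lt (a : ℕ) : rowOf a < 6 := by unfold rowOf; split <;> omega

/-- general lemma: in a graph where every two distinct nonadjacent vertices have a
common neighbor, dist = 2 iff distinct and nonadjacent. -/
lemma dist_eq_two_iff {V : Type*} (H : SimpleGraph V)
    (hP : ∀ u v : V, u ≠ v → ¬H.Adj u v → ∃ w, H.Adj u w ∧ H.Adj w v) (u v : V) :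
    H.dist u v = 2 ↔ (u ≠ v ∧ ¬H.Adj u v) := by
  constructor
  · intro h
    constructor
    · rintro rfl; rw [SimpleGraph.dist_self] at h; omega
    · intro hadj
      rw [← SimpleGraph.dist_eq_one_iff_adj] at hadj
      omega
  · rintro ⟨hne, hadj⟩
    obtain ⟨w, h1, h2⟩ := hP u v hne hadj
    have hle : H.dist u v ≤ 2 := by
      simpa using SimpleGraph.dist_le
        (SimpleGraph.Walk.cons h1 (SimpleGraph.Walk.cons h2 SimpleGraph.Walk.nil))
    have hne0 : H.dist u v ≠ 0 :=
      SimpleGraph.dist_ne_zero_iff_ne_and_reachable.mpr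
        ⟨hne, ⟨SimpleGraph.Walk.cons h1 (SimpleGraph.Walk.cons h2 SimpleGraph.Walk.nil)⟩⟩
    have hne1 : H.dist u v ≠ 1 := by
      intro h1'
      exact hadj (SimpleGraph.dist_eq_one_iff_adj.mp h1')
    omega

lemma distTwoGraph_eq_compl {V : Type*} (H : SimpleGraph V)
    (hP : ∀ u v : V, u ≠ v → ¬H.Adj u v → ∃ w, H.Adj u w ∧ H.Adj w v) :
    distTwoGraph H = Hᶜ := by
  ext u v
  rw [show (distTwoGraph H).Adj u v ↔ H.dist u v = 2 from Iff.rfl,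
    dist_eq_two_iff H hP u v, SimpleGraph.compl_adj]

/-- crossing adjacency: low vertex u (a clique vertex other than the apex) to high vertex v -/
def cross (t u v : ℕ) : Prop := u < t ∧ t ≤ v ∧ u ≠ 0 ∧ Mrel (rowOf u) (v - t)

/-- The extremal graph -/
def myG (n : ℕ) : SimpleGraph (Fin n) where
  Adj u v := u ≠ v ∧ (((u : ℕ) < n - 6 ∧ (v : ℕ) < n - 6) ∨
    cross (n - 6) u v ∨ cross (n - 6) v u)
  symm := by
    constructor
    rintro u v ⟨h1, h2⟩
    exact ⟨h1.symm, by tauto⟩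
  loopless := by constructor; rintro v ⟨h, -⟩; exact h rfl

lemma myG_adj (n : ℕ) (u v : Fin n) : (myG n).Adj u v ↔
    u ≠ v ∧ (((u : ℕ) < n - 6 ∧ (v : ℕ) < n - 6) ∨
      cross (n - 6) u v ∨ cross (n - 6) v u) := Iff.rfl

lemma rowOf_small {a : ℕ} (h1 : 1 ≤ a) (h2 : a ≤ 6) : rowOf a = a - 1 := by
  unfold rowOf; split <;> omega

lemma hPG (n : ℕ) (hn : 13 ≤ n) :
    ∀ u v : Fin n, u ≠ v → ¬(myG n).Adj u v →
      ∃ w, (myG n).Adj u w ∧ (myG n).Adj w v := by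
  set t := n - 6 with ht
  have ht7 : 7 ≤ t := by omega
  suffices H : ∀ u v : Fin n, (u : ℕ) < (v : ℕ) → ¬(myG n).Adj u v →
      ∃ w, (myG n).Adj u w ∧ (myG n).Adj w v by
    intro u v hne hnadj
    rcases lt_trichotomy (u : ℕ) (v : ℕ) with h | h | h
    · exact H u v h hnadj
    · exact absurd (Fin.ext h) hne
    · obtain ⟨w, h1, h2⟩ := H v u h (fun a => hnadj a.symm)
      exact ⟨w, h2.symm, h1.symm⟩
  intro u v hlt hnadj
  have hne : u ≠ v := fun h => by simp [h] at hlt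
  by_cases hv : (v : ℕ) < t
  · -- both low: adjacent, contradiction
    exact absurd ⟨hne, Or.inl ⟨lt_trans hlt hv, hv⟩⟩ hnadj
  · push_neg at hv
    have hvn : (v : ℕ) < n := v.isLt
    have hc : (v : ℕ) - t < 6 := by omega
    by_cases hu : (u : ℕ) < t
    · -- u low, v high
      obtain ⟨r, hr, -⟩ := fact1 ⟨(v : ℕ) - t, hc⟩ ⟨(v : ℕ) - t, hc⟩
      have hrlt : (r : ℕ) < 6 := r.isLt
      refine ⟨⟨(r : ℕ) + 1, by omega⟩, ?_, ?_⟩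
      · -- Adj u w : both low
        refine ⟨?_, Or.inl ⟨hu, by simp; omega⟩⟩
        · intro h
          -- u = w means u.val = r+1, so u ≠ 0 and rowOf u = r, so Mrel holds, so u~v adjacent
          have huv : (u : ℕ) = (r : ℕ) + 1 := by
            have := congrArg (fun x : Fin n => (x : ℕ)) h
            simpa using this
          apply hnadj
          refine ⟨hne, Or.inr (Or.inl ⟨hu, hv, by omega, ?_⟩)⟩
          rw [huv, rowOf_small (by omega) (by omega)]
          simpa using hr
      · -- Adj w v : cross
        refine ⟨?_, Or.inr (Or.inl ⟨by simp; omega, by omega, by simp, ?_⟩)⟩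
        · intro h
          have := congrArg (fun x : Fin n => (x : ℕ)) h
          simp at this; omega
        · simp only
          rw [rowOf_small (by omega) (by omega)]
          simpa using hr
    · -- both high
      push_neg at hu
      have hun : (u : ℕ) < n := u.isLt
      have hb : (u : ℕ) - t < 6 := by omega
      obtain ⟨r, hrb, hrc⟩ := fact1 ⟨(u : ℕ) - t, hb⟩ ⟨(v : ℕ) - t, hc⟩
      have hrlt : (r : ℕ) < 6 := r.isLt
      refine ⟨⟨(r : ℕ) + 1, by omega⟩, ?_, ?_⟩
      · refine ⟨?_, Or.inr (Or.inr ⟨by simp; omega, by omega, by simp, ?_⟩)⟩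
        · intro h
          have := congrArg (fun x : Fin n => (x : ℕ)) h
          simp at this; omega
        · simp only
          rw [rowOf_small (by omega) (by omega)]
          simpa using hrb
      · refine ⟨?_, Or.inr (Or.inl ⟨by simp; omega, by omega, by simp, ?_⟩)⟩
        · intro h
          have := congrArg (fun x : Fin n => (x : ℕ)) h
          simp at this; omega
        · simp only
          rw [rowOf_small (by omega) (by omega)]
          simpa using hrc

lemma not_adj_high (n : ℕ) (u v : Fin n) (hu : n - 6 ≤ (u : ℕ)) (hv : n - 6 ≤ (v : ℕ)) :
    ¬(myG n).Adj u v := by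
  rintro ⟨-, h | h | h⟩
  · omega
  · exact absurd h.1 (by omega)
  · exact absurd h.1 (by omega)

lemma not_adj_low_high (n : ℕ) (u v : Fin n) (hu : (u : ℕ) < n - 6) (hv : n - 6 ≤ (v : ℕ))
    (hM : ¬ Mrel (rowOf (u : ℕ)) ((v : ℕ) - (n - 6)) ∨ (u : ℕ) = 0) :
    ¬(myG n).Adj u v := by
  rintro ⟨-, h | h | h⟩
  · omega
  · rcases hM with hM | hM
    · exact hM h.2.2.2
    · exact h.2.2.1 hM
  · exact absurd h.2.1 (by omega)

lemma hPGc (n : ℕ) (hn : 13 ≤ n) :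
    ∀ u v : Fin n, u ≠ v → ¬(myG n)ᶜ.Adj u v →
      ∃ w, (myG n)ᶜ.Adj u w ∧ (myG n)ᶜ.Adj w v := by
  set t := n - 6 with ht
  have ht7 : 7 ≤ t := by omega
  suffices H : ∀ u v : Fin n, (u : ℕ) < (v : ℕ) → ¬(myG n)ᶜ.Adj u v →
      ∃ w, (myG n)ᶜ.Adj u w ∧ (myG n)ᶜ.Adj w v by
    intro u v hne hnadj
    rcases lt_trichotomy (u : ℕ) (v : ℕ) with h | h | h
    · exact H u v h hnadj
    · exact absurd (Fin.ext h) hne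
    · obtain ⟨w, h1, h2⟩ := H v u h (fun a => hnadj a.symm)
      exact ⟨w, h2.symm, h1.symm⟩
  intro u v hlt hnadj
  have hne : u ≠ v := fun h => by simp [h] at hlt
  have hadj : (myG n).Adj u v := by
    by_contra hc
    exact hnadj ((SimpleGraph.compl_adj (myG n) _ _).mpr ⟨hne, hc⟩)
  have hvn : (v : ℕ) < n := v.isLt
  have hun : (u : ℕ) < n := u.isLt
  by_cases hv : (v : ℕ) < t
  · -- both low: pick a high common non-neighbor column
    obtain ⟨b, hb1, hb2⟩ := fact2 ⟨rowOf (u : ℕ), rowOf_lt _⟩ ⟨rowOf (v : ℕ), rowOf_lt _⟩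
    have hblt : (b : ℕ) < 6 := b.isLt
    refine ⟨⟨t + (b : ℕ), by omega⟩, ?_, ?_⟩
    · refine (SimpleGraph.compl_adj (myG n) _ _).mpr ⟨?_, ?_⟩
      · intro h
        have := congrArg (fun x : Fin n => (x : ℕ)) h
        simp at this; omega
      · refine not_adj_low_high n u _ (by omega) (by simp; omega) (Or.inl ?_)
        have e : t + (b : ℕ) - (n - 6) = b := by omega
        simpa [e] using hb1
    · refine ((SimpleGraph.compl_adj (myG n) _ _).mpr ⟨?_, ?_⟩).symm
      · intro h
        have := congrArg (fun x : Fin n => (x : ℕ)) h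
        simp at this; omega
      · refine not_adj_low_high n v _ (by omega) (by simp; omega) (Or.inl ?_)
        have e : t + (b : ℕ) - (n - 6) = b := by omega
        simpa [e] using hb2
  · push_neg at hv
    by_cases hu : (u : ℕ) < t
    · -- u low, v high; adjacency means cross, so Mrel (rowOf u) (v - t)
      have hcross : cross t u v := by
        rcases hadj.2 with h | h | h
        · exact absurd h.2 (by omega)
        · exact h
        · exact absurd h.2.1 (by omega)
      obtain ⟨b, hb1, -⟩ := fact2 ⟨rowOf (u : ℕ), rowOf_lt _⟩ ⟨rowOf (u : ℕ), rowOf_lt _⟩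
      have hblt : (b : ℕ) < 6 := b.isLt
      have hbne : (b : ℕ) ≠ (v : ℕ) - t := by
        intro h
        have h2 := hcross.2.2.2
        rw [← h] at h2
        have hb1' : ¬ Mrel (rowOf (u : ℕ)) (b : ℕ) := by simpa using hb1
        exact hb1' h2
      refine ⟨⟨t + (b : ℕ), by omega⟩, ?_, ?_⟩
      · refine (SimpleGraph.compl_adj (myG n) _ _).mpr ⟨?_, ?_⟩
        · intro h
          have := congrArg (fun x : Fin n => (x : ℕ)) h
          simp at this; omega
        · refine not_adj_low_high n u _ (by omega) (by simp; omega) (Or.inl ?_)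
          have e : t + (b : ℕ) - (n - 6) = b := by omega
          simpa [e] using hb1
      · refine (SimpleGraph.compl_adj (myG n) _ _).mpr ⟨?_, ?_⟩
        · intro h
          have := congrArg (fun x : Fin n => (x : ℕ)) h
          simp at this; omega
        · exact not_adj_high n _ v (by simp; omega) (by omega)
    · -- both high: adjacency impossible
      push_neg at hu
      exact absurd hadj (not_adj_high n u v (by omega) (by omega))

lemma chrom_compl (n : ℕ) (hn : 13 ≤ n) : (myG n)ᶜ.chromaticNumber = 7 := by
  apply le_antisymm
  · -- coloring with 7 colors
    have hcol : (myG n)ᶜ.Colorable 7 := by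
      refine ⟨SimpleGraph.Coloring.mk
        (fun u => if h : (u : ℕ) < n - 6 then (0 : Fin 7)
          else ⟨(u : ℕ) - (n - 6) + 1, by have := u.isLt; omega⟩) ?_⟩
      intro v w hadj heq
      obtain ⟨hne, hnadj⟩ := (SimpleGraph.compl_adj (myG n) v w).mp hadj
      by_cases hv : (v : ℕ) < n - 6 <;> by_cases hw : (w : ℕ) < n - 6 <;>
        simp only [hv, hw, dif_pos, dif_neg, not_false_iff] at heq
      ·
        exact hnadj ⟨hne, Or.inl ⟨hv, hw⟩⟩
      · simp at hw
        have := congrArg (fun x : Fin 7 => (x : ℕ)) heq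
        simp at this
      · have := congrArg (fun x : Fin 7 => (x : ℕ)) heq
        simp at this
      · have := congrArg (fun x : Fin 7 => (x : ℕ)) heq
        simp at this
        exact hne (Fin.ext (by have := v.isLt; have := w.isLt; omega))
    simpa using hcol.chromaticNumber_le
  · -- clique of size 7 : vertex 0 and the six high vertices
    have hinj : Function.Injective (fun i : Fin 7 =>
        if (i : ℕ) = 0 then (⟨0, by omega⟩ : Fin n)
        else ⟨n - 6 + (i : ℕ) - 1, by have := i.isLt; omega⟩) := by
      intro i j hij
      simp only at hij
      by_cases hi : (i : ℕ) = 0 <;> by_cases hj : (j : ℕ) = 0 <;>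
        simp only [hi, hj, if_pos, if_neg, not_false_iff] at hij <;>
        first
        | (exact Fin.ext (by omega))
        | (have := congrArg (fun x : Fin n => (x : ℕ)) hij
           simp at this
           first
           | omega
           | (exact Fin.ext (by omega)))
    have hclique : (myG n)ᶜ.IsClique ((Finset.univ.image (fun i : Fin 7 =>
        if (i : ℕ) = 0 then (⟨0, by omega⟩ : Fin n)
        else ⟨n - 6 + (i : ℕ) - 1, by have := i.isLt; omega⟩)) : Finset (Fin n)) := by
      rw [SimpleGraph.isClique_iff]
      intro a ha b hb hne
      simp only [Finset.coe_image, Set.mem_image, Finset.mem_coe, Finset.mem_univ,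
        Finset.coe_univ, Set.image_univ, Set.mem_range] at ha hb
      obtain ⟨i, rfl⟩ := ha
      obtain ⟨j, rfl⟩ := hb
      refine (SimpleGraph.compl_adj (myG n) _ _).mpr ⟨hne, ?_⟩
      by_cases hi : (i : ℕ) = 0 <;> by_cases hj : (j : ℕ) = 0 <;>
        simp only [hi, hj, if_pos, if_neg, not_false_iff]
      · exact (myG n).loopless.irrefl _
      · exact not_adj_low_high n _ _ (by simp; omega) (by simp; have := j.isLt; omega)
          (Or.inr (by simp))
      · intro h
        exact (not_adj_low_high n _ _ (by simp; omega) (by simp; have := i.isLt; omega)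
          (Or.inr (by simp))) h.symm
      · exact not_adj_high n _ _ (by simp; have := i.isLt; omega)
          (by simp; have := j.isLt; omega)
    have := hclique.card_le_chromaticNumber
    rwa [Finset.card_image_of_injective _ hinj, Finset.card_univ, Fintype.card_fin] at this

lemma chrom_myG (n : ℕ) (hn : 13 ≤ n) : (myG n).chromaticNumber = ((n - 6 : ℕ) : ℕ∞) := by
  apply le_antisymm
  · -- coloring with n - 6 colors
    have hcol : (myG n).Colorable (n - 6) := by
      refine ⟨SimpleGraph.Coloring.mk
        (fun u => if h : (u : ℕ) < n - 6 then (⟨(u : ℕ), h⟩ : Fin (n - 6))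
          else ⟨((u : ℕ) - (n - 6) + 4) % 6 + 1, by
            have : ((u : ℕ) - (n - 6) + 4) % 6 < 6 := Nat.mod_lt _ (by omega)
            omega⟩) ?_⟩
      intro v w hadj heq
      obtain ⟨hne, hor⟩ := hadj
      by_cases hv : (v : ℕ) < n - 6 <;> by_cases hw : (w : ℕ) < n - 6 <;>
        simp only [hv, hw, dif_pos, dif_neg, not_false_iff] at heq <;>
        have heq' := congrArg (fun x : Fin (n - 6) => (x : ℕ)) heq <;>
        simp only at heq'
      · exact hne (Fin.ext heq')
      · -- v low colored v.val = z(c)+1 with c = w - (n-6); adjacency must be cross v w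
        have hcross : cross (n - 6) v w := by
          rcases hor with h | h | h
          · exact absurd h.2 (by omega)
          · exact h
          · exact absurd h.2.1 (by omega)
        have hM := hcross.2.2.2
        have hc : (w : ℕ) - (n - 6) < 6 := by have := w.isLt; omega
        have hrow : rowOf (v : ℕ) = ((w : ℕ) - (n - 6) + 4) % 6 := by
          rw [rowOf_small (by omega) (by
            have : ((w : ℕ) - (n - 6) + 4) % 6 < 6 := Nat.mod_lt _ (by omega)
            omega)]
          omega
        rw [hrow] at hM
        have hf : ¬ Mrel (((w : ℕ) - (n - 6) + 4) % 6) ((w : ℕ) - (n - 6)) := by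
          simpa using fact3 ⟨(w : ℕ) - (n - 6), hc⟩
        exact hf hM
      · have hcross : cross (n - 6) w v := by
          rcases hor with h | h | h
          · exact absurd h.1 (by omega)
          · exact absurd h.2.1 (by omega)
          · exact h
        have hM := hcross.2.2.2
        have hc : (v : ℕ) - (n - 6) < 6 := by have := v.isLt; omega
        have hrow : rowOf (w : ℕ) = ((v : ℕ) - (n - 6) + 4) % 6 := by
          rw [rowOf_small (by omega) (by
            have : ((v : ℕ) - (n - 6) + 4) % 6 < 6 := Nat.mod_lt _ (by omega)
            omega)]
          omega
        rw [hrow] at hM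
        have hf : ¬ Mrel (((v : ℕ) - (n - 6) + 4) % 6) ((v : ℕ) - (n - 6)) := by
          simpa using fact3 ⟨(v : ℕ) - (n - 6), hc⟩
        exact hf hM
      · -- both high: not adjacent
        exact not_adj_high n v w (by omega) (by omega) ⟨hne, hor⟩
    simpa using hcol.chromaticNumber_le
  · -- clique of size n - 6
    have hinj : Function.Injective (fun i : Fin (n - 6) =>
        (⟨(i : ℕ), by have := i.isLt; omega⟩ : Fin n)) := by
      intro i j hij
      have := congrArg (fun x : Fin n => (x : ℕ)) hij
      simp at this
      exact Fin.ext this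
    have hclique : (myG n).IsClique ((Finset.univ.image (fun i : Fin (n - 6) =>
        (⟨(i : ℕ), by have := i.isLt; omega⟩ : Fin n))) : Finset (Fin n)) := by
      rw [SimpleGraph.isClique_iff]
      intro a ha b hb hne
      simp only [Finset.coe_image, Finset.coe_univ, Set.image_univ, Set.mem_range] at ha hb
      obtain ⟨i, rfl⟩ := ha
      obtain ⟨j, rfl⟩ := hb
      exact ⟨hne, Or.inl ⟨by simpa using i.isLt, by simpa using j.isLt⟩⟩
    have := hclique.card_le_chromaticNumber
    rwa [Finset.card_image_of_injective _ hinj, Finset.card_univ, Fintype.card_fin] at this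

theorem exists_chi2_add_chi2_compl_eq (n : ℕ) (hn : 13 ≤ n) :
    ∃ G : SimpleGraph (Fin n), chi2 G + chi2 Gᶜ = (n : ℕ∞) + 1 := by
  refine ⟨myG n, ?_⟩
  have h1 : chi2 (myG n) = 7 := by
    unfold chi2
    rw [distTwoGraph_eq_compl (myG n) (hPG n hn)]
    exact chrom_compl n hn
  have h2 : chi2 (myG n)ᶜ = ((n - 6 : ℕ) : ℕ∞) := by
    unfold chi2
    rw [distTwoGraph_eq_compl ((myG n)ᶜ) (hPGc n hn), compl_compl]
    exact chrom_myG n hn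
  rw [h1, h2]
  have : ((7 : ℕ) : ℕ∞) + ((n - 6 : ℕ) : ℕ∞) = ((n + 1 : ℕ) : ℕ∞) := by
    rw [← Nat.cast_add]
    congr 1
    omega
  simpa using this
end

section
/- Let G be a finite simple graph of order n ≥ 5. If the minimum degree satisfies 2·δ(G) ≥ n + 1 (i.e. δ(G) ≥ (n+1)/2), then the injective chromatic number satisfies χᵢ(G) = n. -/
open SimpleGraph

/-- The graph on the vertices of `G` where two distinct vertices are adjacent
iff they have a common neighbor in `G`. -/
def commonNbrGraph {V : Type*} (G : SimpleGraph V) : SimpleGraph V where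
  Adj u v := u ≠ v ∧ ∃ w, G.Adj u w ∧ G.Adj v w
  symm := by
    constructor
    rintro u v ⟨huv, w, h1, h2⟩
    exact ⟨huv.symm, w, h2, h1⟩
  loopless := by
    constructor
    rintro v ⟨hv, -⟩
    exact hv rfl

/-- The injective chromatic number of `G`. -/
noncomputable def chiInj {V : Type*} (G : SimpleGraph V) : ℕ∞ :=
  (commonNbrGraph G).chromaticNumber

theorem chiInj_eq_card_of_minDegree {V : Type*} [Fintype V] (G : SimpleGraph V)
    [DecidableRel G.Adj] (hn : 5 ≤ Fintype.card V)
    (hδ : Fintype.card V + 1 ≤ 2 * G.minDegree) :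
    chiInj G = (Fintype.card V : ℕ∞) := by
  have htop : commonNbrGraph G = ⊤ := by
    classical
    ext u v
    simp only [top_adj]
    constructor
    · exact fun h => h.1
    · intro huv
      refine ⟨huv, ?_⟩
      have h1 : G.minDegree ≤ (G.neighborFinset u).card := by
        rw [card_neighborFinset_eq_degree]; exact G.minDegree_le_degree u
      have h2 : G.minDegree ≤ (G.neighborFinset v).card := by
        rw [card_neighborFinset_eq_degree]; exact G.minDegree_le_degree v
      have hu : ((G.neighborFinset u) ∪ (G.neighborFinset v)).card ≤ Fintype.card V :=
        Finset.card_le_card (Finset.subset_univ _)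
      have hie := Finset.card_union_add_card_inter (G.neighborFinset u) (G.neighborFinset v)
      have hpos : 0 < ((G.neighborFinset u) ∩ (G.neighborFinset v)).card := by omega
      obtain ⟨w, hw⟩ := Finset.card_pos.mp hpos
      simp only [Finset.mem_inter, mem_neighborFinset] at hw
      exact ⟨w, hw.1, hw.2⟩
  rw [chiInj, htop]
  exact chromaticNumber_top
end

section
/- Let G be a finite simple graph of order n ≥ 5. If the minimum degree satisfies δ(G) = ⌊(n−1)/2⌋, then the injective chromatic number satisfies χᵢ(G) ≥ δ(G) + 1. -/
open SimpleGraph Finset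

theorem chiInj_ge_of_minDegree {V : Type*} [Fintype V] (G : SimpleGraph V)
    [DecidableRel G.Adj] (hn : 5 ≤ Fintype.card V)
    (hδ : G.minDegree = (Fintype.card V - 1) / 2) :
    (G.minDegree : ℕ∞) + 1 ≤ chiInj G := by
  classical
  set n := Fintype.card V with hn'
  set δ := G.minDegree with hδ'
  -- disjoint neighborhoods for non-adjacent (in commonNbrGraph) vertices
  have hdisj : ∀ u v : V, u ≠ v → ¬ (commonNbrGraph G).Adj u v →
      Disjoint (G.neighborFinset u) (G.neighborFinset v) := by
    intro u v huv hadj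
    rw [Finset.disjoint_left]
    intro w hwu hwv
    rw [mem_neighborFinset] at hwu hwv
    exact hadj ⟨huv, w, hwu, hwv⟩
  have hdeg : ∀ u : V, δ ≤ (G.neighborFinset u).card := by
    intro u
    rw [card_neighborFinset_eq_degree]
    exact G.minDegree_le_degree u
  -- no independent triple in commonNbrGraph
  have key : ∀ u v w : V, u ≠ v → u ≠ w → v ≠ w →
      ¬ (commonNbrGraph G).Adj u v → ¬ (commonNbrGraph G).Adj u w →
      ¬ (commonNbrGraph G).Adj v w → False := by
    intro u v w huv huw hvw h1 h2 h3
    have d12 := hdisj u v huv h1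
    have d13 := hdisj u w huw h2
    have d23 := hdisj v w hvw h3
    have dU : Disjoint (G.neighborFinset u) (G.neighborFinset v ∪ G.neighborFinset w) :=
      Finset.disjoint_union_right.mpr ⟨d12, d13⟩
    have hcard : (G.neighborFinset u ∪ (G.neighborFinset v ∪ G.neighborFinset w)).card
        = (G.neighborFinset u).card + ((G.neighborFinset v).card + (G.neighborFinset w).card) := by
      rw [Finset.card_union_of_disjoint dU, Finset.card_union_of_disjoint d23]
    have hle : (G.neighborFinset u ∪ (G.neighborFinset v ∪ G.neighborFinset w)).card ≤ n :=
      Finset.card_le_univ _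
    have h3δ : δ + (δ + δ) ≤ n := by
      have hu := hdeg u; have hv := hdeg v; have hw := hdeg w
      omega
    -- forces n = 6, δ = 2, all three degrees = 2, union = univ
    have hn6 : n = 6 ∧ δ = 2 := by omega
    obtain ⟨hn6, hδ2⟩ := hn6
    have hdu := hdeg u; have hdv := hdeg v; have hdw := hdeg w
    have hcard6 : (G.neighborFinset u ∪ (G.neighborFinset v ∪ G.neighborFinset w)).card = n := by
      omega
    have huniv : (G.neighborFinset u ∪ (G.neighborFinset v ∪ G.neighborFinset w)) = Finset.univ :=
      Finset.eq_univ_of_card _ hcard6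
    -- each of u, v, w lies in one of the neighborhoods
    have hmem : ∀ x : V, x ∈ G.neighborFinset u ∨ x ∈ G.neighborFinset v ∨
        x ∈ G.neighborFinset w := by
      intro x
      have := huniv ▸ Finset.mem_univ x
      simpa [Finset.mem_union] using this
    have hnotself : ∀ x : V, x ∉ G.neighborFinset x := by
      intro x hx
      rw [mem_neighborFinset] at hx
      exact G.loopless.irrefl x hx
    have symmem : ∀ x y : V, x ∈ G.neighborFinset y → y ∈ G.neighborFinset x := by
      intro x y h
      rw [mem_neighborFinset] at h ⊢
      exact h.symm
    rcases hmem u with hu | hu | hu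
    · exact hnotself u hu
    · -- u ~ v
      rcases hmem w with hw | hw | hw
      · -- w ~ u : u ∈ N v and u ∈ N w
        exact (Finset.disjoint_left.mp d23 hu (symmem _ _ hw)).elim
      · -- w ~ v : v ∈ N u and v ∈ N w
        exact (Finset.disjoint_left.mp d13 (symmem _ _ hu) (symmem _ _ hw)).elim
      · exact hnotself w hw
    · -- u ~ w
      rcases hmem v with hv | hv | hv
      · -- v ~ u : u ∈ N w and u ∈ N v
        exact (Finset.disjoint_left.mp d23 (symmem _ _ hv) hu).elim
      · exact hnotself v hv
      · -- v ~ w : w ∈ N u and w ∈ N v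
        exact (Finset.disjoint_left.mp d12 (symmem _ _ hu) (symmem _ _ hv)).elim
  -- any coloring uses at least δ + 1 colors
  have main : ∀ m : ℕ, (commonNbrGraph G).Colorable m → δ + 1 ≤ m := by
    intro m hm
    obtain ⟨C⟩ := hm
    have hfib : ∀ c : Fin m, (Finset.univ.filter (fun x => C x = c)).card ≤ 2 := by
      intro c
      by_contra h
      push_neg at h
      rw [Finset.two_lt_card_iff] at h
      obtain ⟨a, b, d, ha, hb, hd, hab, had, hbd⟩ := h
      simp only [Finset.mem_filter] at ha hb hd
      have nadj : ∀ x y : V, C x = c → C y = c → ¬ (commonNbrGraph G).Adj x y := by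
        intro x y hx hy hadj
        exact C.valid hadj (hx.trans hy.symm)
      exact key a b d hab had hbd (nadj a b ha.2 hb.2) (nadj a d ha.2 hd.2)
        (nadj b d hb.2 hd.2)
    have hsum : n = ∑ c : Fin m, (Finset.univ.filter (fun x => C x = c)).card := by
      rw [hn']
      rw [← Finset.card_univ]
      exact Finset.card_eq_sum_card_fiberwise (fun x _ => Finset.mem_univ (C x))
    have hle : n ≤ m * 2 := by
      rw [hsum]
      calc ∑ c : Fin m, (Finset.univ.filter (fun x => C x = c)).card
          ≤ ∑ _c : Fin m, 2 := Finset.sum_le_sum (fun c _ => hfib c)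
        _ = m * 2 := by simp [Finset.sum_const, Finset.card_univ]
    omega
  -- conclude
  rw [chiInj, SimpleGraph.chromaticNumber]
  refine le_iInf₂ fun m hm => ?_
  have := main m hm
  exact_mod_cast Nat.cast_le.mpr (by exact_mod_cast this : δ + 1 ≤ m)
end

section
/- Let G be a k-regular finite simple graph of order n ≥ 5. If 2k > n or 2k < n − 2, then n + 1 ≤ χᵢ(G) + χᵢ(Ḡ) ≤ 2n. -/
open SimpleGraph

lemma commonNbrGraph_eq_top_of_dense {V : Type*} [Fintype V] (G : SimpleGraph V)
    [DecidableRel G.Adj] {k : ℕ} (hreg : G.IsRegularOfDegree k)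
    (hk : Fintype.card V < 2 * k) : commonNbrGraph G = ⊤ := by
  classical
  ext u v
  show (u ≠ v ∧ ∃ w, G.Adj u w ∧ G.Adj v w) ↔ u ≠ v
  refine ⟨fun h => h.1, fun h => ⟨h, ?_⟩⟩
  by_contra h'
  push_neg at h'
  have hdisj : G.neighborFinset u ∩ G.neighborFinset v = ∅ := by
    rw [Finset.eq_empty_iff_forall_notMem]
    intro w hw
    rw [Finset.mem_inter, mem_neighborFinset, mem_neighborFinset] at hw
    exact h' w hw.1 hw.2
  have hcard : (G.neighborFinset u ∪ G.neighborFinset v).card = 2 * k := by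
    rw [Finset.card_union_of_disjoint (Finset.disjoint_iff_inter_eq_empty.2 hdisj),
      card_neighborFinset_eq_degree, card_neighborFinset_eq_degree, hreg u, hreg v]
    ring
  have := Finset.card_le_univ (G.neighborFinset u ∪ G.neighborFinset v)
  rw [hcard] at this
  omega

lemma chiInj_eq_card_of_dense {V : Type*} [Fintype V] (G : SimpleGraph V)
    [DecidableRel G.Adj] {k : ℕ} (hreg : G.IsRegularOfDegree k)
    (hk : Fintype.card V < 2 * k) : chiInj G = Fintype.card V := by
  rw [chiInj, commonNbrGraph_eq_top_of_dense G hreg hk, chromaticNumber_top]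

lemma one_le_chiInj {V : Type*} [Fintype V] [Nonempty V] (G : SimpleGraph V) :
    1 ≤ chiInj G :=
  Order.one_le_iff_pos.2 <| chromaticNumber_pos (commonNbrGraph G).colorable_of_fintype

theorem chiInj_nordhaus_gaddum_regular_far {V : Type*} [Fintype V] (G : SimpleGraph V)
    [DecidableRel G.Adj] (k : ℕ) (hn : 5 ≤ Fintype.card V)
    (hreg : G.IsRegularOfDegree k)
    (hk : 2 * k > Fintype.card V ∨ 2 * k < Fintype.card V - 2) :
    (Fintype.card V : ℕ∞) + 1 ≤ chiInj G + chiInj Gᶜ ∧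
      chiInj G + chiInj Gᶜ ≤ 2 * (Fintype.card V : ℕ∞) := by
  classical
  have hne : Nonempty V := Fintype.card_pos_iff.mp (by omega)
  constructor
  · rcases hk with hk | hk
    · rw [chiInj_eq_card_of_dense G hreg hk]
      exact add_le_add_right (one_le_chiInj Gᶜ) _
    · have hregc : Gᶜ.IsRegularOfDegree (Fintype.card V - 1 - k) := hreg.compl
      have hdeg : k < Fintype.card V := by
        obtain ⟨v⟩ := hne
        have := G.degree_lt_card_verts v
        rw [hreg v] at this
        exact this
      have hkc : Fintype.card V < 2 * (Fintype.card V - 1 - k) := by omega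
      rw [chiInj_eq_card_of_dense Gᶜ hregc hkc]
      calc (Fintype.card V : ℕ∞) + 1 = 1 + (Fintype.card V : ℕ∞) := by
            rw [add_comm]
        _ ≤ chiInj G + (Fintype.card V : ℕ∞) := add_le_add_left (one_le_chiInj G) _
  · have h1 : chiInj G ≤ (Fintype.card V : ℕ∞) :=
      (commonNbrGraph G).colorable_of_fintype.chromaticNumber_le
    have h2 : chiInj Gᶜ ≤ (Fintype.card V : ℕ∞) :=
      (commonNbrGraph Gᶜ).colorable_of_fintype.chromaticNumber_le
    calc chiInj G + chiInj Gᶜ ≤ (Fintype.card V : ℕ∞) + (Fintype.card V : ℕ∞) :=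
          add_le_add h1 h2
      _ = 2 * (Fintype.card V : ℕ∞) := (two_mul _).symm
end

section
/- Let G be a k-regular finite simple graph of order n ≥ 5. If 2k = n or 2k = n − 2, then n ≤ χᵢ(G) + χᵢ(Ḡ) ≤ 2n. -/
open SimpleGraph

lemma no_three {V : Type*} [Fintype V] (R : SimpleGraph V) [DecidableRel R.Adj]
    (r : ℕ) (hreg : R.IsRegularOfDegree r) (hn : 6 ≤ Fintype.card V)
    (h2r : Fintype.card V ≤ 2 * r + 2) (u v w : V)
    (huv : u ≠ v) (huw : u ≠ w) (hvw : v ≠ w)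
    (h1 : ∀ x, ¬(R.Adj u x ∧ R.Adj v x)) (h2 : ∀ x, ¬(R.Adj u x ∧ R.Adj w x))
    (h3 : ∀ x, ¬(R.Adj v x ∧ R.Adj w x)) : False := by
  classical
  set A := R.neighborFinset u with hA
  set B := R.neighborFinset v with hB
  set C := R.neighborFinset w with hC
  have cardA : A.card = r := hreg u
  have cardB : B.card = r := hreg v
  have cardC : C.card = r := hreg w
  have dAB : Disjoint A B := by
    rw [Finset.disjoint_left]
    intro x hx hx'
    exact h1 x ⟨(R.mem_neighborFinset u x).1 hx, (R.mem_neighborFinset v x).1 hx'⟩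
  have dAC : Disjoint A C := by
    rw [Finset.disjoint_left]
    intro x hx hx'
    exact h2 x ⟨(R.mem_neighborFinset u x).1 hx, (R.mem_neighborFinset w x).1 hx'⟩
  have dBC : Disjoint B C := by
    rw [Finset.disjoint_left]
    intro x hx hx'
    exact h3 x ⟨(R.mem_neighborFinset v x).1 hx, (R.mem_neighborFinset w x).1 hx'⟩
  have dU : Disjoint (A ∪ B) C := Finset.disjoint_union_left.2 ⟨dAC, dBC⟩
  have cardU : (A ∪ B ∪ C).card = 3 * r := by
    rw [Finset.card_union_of_disjoint dU, Finset.card_union_of_disjoint dAB,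
      cardA, cardB, cardC]
    ring
  have hle : 3 * r ≤ Fintype.card V := by
    rw [← cardU]
    exact Finset.card_le_univ _
  have hr2 : r = 2 := by omega
  have hcard6 : Fintype.card V = 6 := by omega
  have hUuniv : A ∪ B ∪ C = Finset.univ := by
    apply Finset.eq_univ_of_card
    rw [cardU, hr2, hcard6]
  have memP : ∀ x : V, x ∈ A ∨ x ∈ B ∨ x ∈ C := by
    intro x
    have : x ∈ A ∪ B ∪ C := hUuniv ▸ Finset.mem_univ x
    simpa [Finset.mem_union, or_assoc] using this
  -- translate memberships to adjacencies
  have hu : R.Adj v u ∨ R.Adj w u := by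
    rcases memP u with h | h | h
    · exact absurd ((R.mem_neighborFinset u u).1 h) (R.irrefl)
    · exact Or.inl ((R.mem_neighborFinset v u).1 h)
    · exact Or.inr ((R.mem_neighborFinset w u).1 h)
  have hv : R.Adj u v ∨ R.Adj w v := by
    rcases memP v with h | h | h
    · exact Or.inl ((R.mem_neighborFinset u v).1 h)
    · exact absurd ((R.mem_neighborFinset v v).1 h) (R.irrefl)
    · exact Or.inr ((R.mem_neighborFinset w v).1 h)
  have hw : R.Adj u w ∨ R.Adj v w := by
    rcases memP w with h | h | h
    · exact Or.inl ((R.mem_neighborFinset u w).1 h)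
    · exact Or.inr ((R.mem_neighborFinset v w).1 h)
    · exact absurd ((R.mem_neighborFinset w w).1 h) (R.irrefl)
  rcases hu with hu | hu
  · rcases hv with hv | hv
    · rcases hw with hw | hw
      · exact h3 u ⟨hu, hw.symm⟩
      · exact h2 v ⟨hv, hw.symm⟩
    · exact h2 v ⟨hu.symm, hv⟩
  · rcases hv with hv | hv
    · exact h3 u ⟨hv.symm, hu⟩
    · exact h1 w ⟨hu.symm, hv.symm⟩

lemma card_le_two_mul {V : Type*} [Fintype V] (R : SimpleGraph V) [DecidableRel R.Adj]
    (r : ℕ) (hreg : R.IsRegularOfDegree r) (hn : 6 ≤ Fintype.card V)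
    (h2r : Fintype.card V ≤ 2 * r + 2) (m : ℕ) (hc : (commonNbrGraph R).Colorable m) :
    Fintype.card V ≤ 2 * m := by
  classical
  obtain ⟨C⟩ := hc
  have key : ∀ c : Fin m, (Finset.univ.filter fun x : V => C x = c).card ≤ 2 := by
    intro c
    by_contra hlt
    push_neg at hlt
    rw [Finset.two_lt_card] at hlt
    obtain ⟨a, ha, b, hb, d, hd, hab, had, hbd⟩ := hlt
    simp only [Finset.mem_filter, Finset.mem_univ, true_and] at ha hb hd
    have nadj : ∀ x y : V, C x = c → C y = c → x ≠ y → ∀ z, ¬(R.Adj x z ∧ R.Adj y z) := by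
      intro x y hx hy hxy z hz
      have : (commonNbrGraph R).Adj x y := ⟨hxy, z, hz⟩
      exact C.valid this (hx.trans hy.symm)
    exact no_three R r hreg hn h2r a b d hab had hbd
      (nadj a b ha hb hab) (nadj a d ha hd had) (nadj b d hb hd hbd)
  calc Fintype.card V = ∑ c : Fin m, (Finset.univ.filter fun x : V => C x = c).card := by
        rw [← Finset.card_univ]
        exact Finset.card_eq_sum_card_fiberwise (fun x _ => Finset.mem_univ (C x))
    _ ≤ ∑ _c : Fin m, 2 := Finset.sum_le_sum fun c _ => key c
    _ = 2 * m := by simp [mul_comm]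

theorem chiInj_nordhaus_gaddum_regular_mid {V : Type*} [Fintype V] (G : SimpleGraph V)
    [DecidableRel G.Adj] (k : ℕ) (hn : 5 ≤ Fintype.card V)
    (hreg : G.IsRegularOfDegree k)
    (hk : 2 * k = Fintype.card V ∨ 2 * k = Fintype.card V - 2) :
    (Fintype.card V : ℕ∞) ≤ chiInj G + chiInj Gᶜ ∧
      chiInj G + chiInj Gᶜ ≤ 2 * (Fintype.card V : ℕ∞) := by
  classical
  set n := Fintype.card V with hn'
  have hn6 : 6 ≤ n := by omega
  have h2G : n ≤ 2 * k + 2 := by omega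
  have h2G' : n ≤ 2 * (n - 1 - k) + 2 := by omega
  have hcompl : Gᶜ.IsRegularOfDegree (n - 1 - k) := hreg.compl
  set a := (commonNbrGraph G).chromaticNumber.toNat with ha
  set b := (commonNbrGraph Gᶜ).chromaticNumber.toNat with hb
  have hc1 : (commonNbrGraph G).Colorable a := colorable_chromaticNumber_of_fintype _
  have hc2 : (commonNbrGraph Gᶜ).Colorable b := colorable_chromaticNumber_of_fintype _
  have ne1 : (commonNbrGraph G).chromaticNumber ≠ ⊤ :=
    chromaticNumber_ne_top_iff_exists.mpr ⟨_, (commonNbrGraph G).colorable_of_fintype⟩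
  have ne2 : (commonNbrGraph Gᶜ).chromaticNumber ≠ ⊤ :=
    chromaticNumber_ne_top_iff_exists.mpr ⟨_, (commonNbrGraph Gᶜ).colorable_of_fintype⟩
  have e1 : chiInj G = (a : ℕ∞) := (ENat.coe_toNat ne1).symm
  have e2 : chiInj Gᶜ = (b : ℕ∞) := (ENat.coe_toNat ne2).symm
  have b1 : n ≤ 2 * a := card_le_two_mul G k hreg hn6 h2G a hc1
  have b2 : n ≤ 2 * b := card_le_two_mul Gᶜ (n - 1 - k) hcompl hn6 h2G' b hc2
  have u1 : a ≤ n := by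
    have h := ((commonNbrGraph G).colorable_of_fintype).chromaticNumber_le
    rw [← ENat.coe_toNat ne1] at h
    exact_mod_cast h
  have u2 : b ≤ n := by
    have h := ((commonNbrGraph Gᶜ).colorable_of_fintype).chromaticNumber_le
    rw [← ENat.coe_toNat ne2] at h
    exact_mod_cast h
  rw [e1, e2]
  constructor
  · exact_mod_cast (by omega : n ≤ a + b)
  · rw [← Nat.cast_add, ← Nat.cast_ofNat (n := 2), ← Nat.cast_mul]
    exact_mod_cast (by omega : a + b ≤ 2 * n)
end

section
/- Let G be a finite simple graph of odd order n ≥ 7. Then n + 1 ≤ χᵢ(G) + χᵢ(Ḡ) ≤ 2n. -/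
open SimpleGraph

section Helpers

open Finset

variable {V : Type*} [Fintype V] [DecidableEq V]

lemma commonNbr_adj {G : SimpleGraph V} {u v : V} :
    (commonNbrGraph G).Adj u v ↔ u ≠ v ∧ ∃ w, G.Adj u w ∧ G.Adj v w := Iff.rfl

lemma even_of_involution {α : Type*} (s : Finset α) (g : ∀ a ∈ s, α)
    (gm : ∀ a ha, g a ha ∈ s) (h4 : ∀ a ha, g (g a ha) (gm a ha) = a)
    (hne : ∀ a ha, g a ha ≠ a) : Even s.card := by
  have h : ∑ _x ∈ s, (1 : ZMod 2) = 0 :=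
    Finset.sum_involution g (fun a ha => by decide) (fun a ha _ => hne a ha) gm h4
  rw [Finset.sum_const, nsmul_eq_mul, mul_one] at h
  rwa [ZMod.natCast_eq_zero_iff, ← even_iff_two_dvd] at h

/-- If two non-adjacent distinct vertices have large degree sum, they have a common neighbor. -/
lemma common_of_not_adj (G : SimpleGraph V) [DecidableRel G.Adj] {u v : V} (hne : u ≠ v)
    (hnadj : ¬ G.Adj u v) (hdeg : Fintype.card V ≤ G.degree u + G.degree v + 1) :
    ∃ w, G.Adj u w ∧ G.Adj v w := by
  by_contra hcom
  push_neg at hcom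
  have hdisj : Disjoint (G.neighborFinset u) (G.neighborFinset v) := by
    rw [Finset.disjoint_left]
    intro w hw1 hw2
    exact hcom w (by rwa [mem_neighborFinset] at hw1) (by rwa [mem_neighborFinset] at hw2)
  have hsub : G.neighborFinset u ∪ G.neighborFinset v ⊆ (univ.erase u).erase v := by
    intro w hw
    rcases Finset.mem_union.mp hw with hw | hw
    · rw [mem_neighborFinset] at hw
      refine Finset.mem_erase.mpr ⟨fun h => hnadj (h ▸ hw), Finset.mem_erase.mpr ⟨(G.ne_of_adj hw).symm, mem_univ _⟩⟩
    · rw [mem_neighborFinset] at hw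
      refine Finset.mem_erase.mpr ⟨(G.ne_of_adj hw).symm, Finset.mem_erase.mpr ⟨fun h => hnadj (h ▸ hw).symm, mem_univ _⟩⟩
  have h1 : (G.neighborFinset u ∪ G.neighborFinset v).card = G.degree u + G.degree v := by
    rw [Finset.card_union_of_disjoint hdisj, card_neighborFinset_eq_degree, card_neighborFinset_eq_degree]
  have h2 : ((univ.erase u).erase v).card = Fintype.card V - 2 := by
    rw [Finset.card_erase_of_mem (Finset.mem_erase.mpr ⟨hne.symm, mem_univ _⟩),
      Finset.card_erase_of_mem (mem_univ _), Finset.card_univ]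
    omega
  have h3 := Finset.card_le_card hsub
  have h4 : 2 ≤ Fintype.card V := Fintype.one_lt_card_iff_nontrivial.mpr ⟨u, v, hne⟩
  omega

/-- If two distinct vertices have degree sum at least `card V + 1`, they have a common neighbor. -/
lemma common_of_big_deg (G : SimpleGraph V) [DecidableRel G.Adj] {u v : V} (hne : u ≠ v)
    (hdeg : Fintype.card V + 1 ≤ G.degree u + G.degree v) :
    ∃ w, G.Adj u w ∧ G.Adj v w := by
  by_cases hadj : G.Adj u v
  · by_contra hcom
    push_neg at hcom
    have hdisj : Disjoint ((G.neighborFinset u).erase v) ((G.neighborFinset v).erase u) := by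
      rw [Finset.disjoint_left]
      intro w hw1 hw2
      have h1 := (Finset.mem_erase.mp hw1).2
      have h2 := (Finset.mem_erase.mp hw2).2
      rw [mem_neighborFinset] at h1 h2
      exact hcom w h1 h2
    have hsub : (G.neighborFinset u).erase v ∪ (G.neighborFinset v).erase u ⊆ (univ.erase u).erase v := by
      intro w hw
      rcases Finset.mem_union.mp hw with hw | hw
      · obtain ⟨hwv, hw⟩ := Finset.mem_erase.mp hw
        rw [mem_neighborFinset] at hw
        exact Finset.mem_erase.mpr ⟨hwv, Finset.mem_erase.mpr ⟨(G.ne_of_adj hw).symm, mem_univ _⟩⟩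
      · obtain ⟨hwu, hw⟩ := Finset.mem_erase.mp hw
        rw [mem_neighborFinset] at hw
        exact Finset.mem_erase.mpr ⟨(G.ne_of_adj hw).symm, Finset.mem_erase.mpr ⟨hwu, mem_univ _⟩⟩
    have h1 : ((G.neighborFinset u).erase v ∪ (G.neighborFinset v).erase u).card
        = (G.degree u - 1) + (G.degree v - 1) := by
      rw [Finset.card_union_of_disjoint hdisj,
        Finset.card_erase_of_mem (by rw [mem_neighborFinset]; exact hadj),
        Finset.card_erase_of_mem (by rw [mem_neighborFinset]; exact hadj.symm),
        card_neighborFinset_eq_degree, card_neighborFinset_eq_degree]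
    have h2 : ((univ.erase u).erase v).card = Fintype.card V - 2 := by
      rw [Finset.card_erase_of_mem (Finset.mem_erase.mpr ⟨hne.symm, mem_univ _⟩),
        Finset.card_erase_of_mem (mem_univ _), Finset.card_univ]
      omega
    have h3 := Finset.card_le_card hsub
    have h4 : 2 ≤ Fintype.card V := Fintype.one_lt_card_iff_nontrivial.mpr ⟨u, v, hne⟩
    have h5 : 1 ≤ G.degree u := by
      rw [← card_neighborFinset_eq_degree]
      exact Finset.card_pos.mpr ⟨v, by rw [mem_neighborFinset]; exact hadj⟩
    have h6 : 1 ≤ G.degree v := by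
      rw [← card_neighborFinset_eq_degree]
      exact Finset.card_pos.mpr ⟨u, by rw [mem_neighborFinset]; exact hadj.symm⟩
    omega
  · exact common_of_not_adj G hne hadj (by omega)

/-- The degree of any vertex is at most the number of colors of any injective coloring. -/
lemma deg_le_of_colorable (G : SimpleGraph V) [DecidableRel G.Adj] {a : ℕ}
    (hca : (commonNbrGraph G).Colorable a) (v : V) : G.degree v ≤ a := by
  obtain ⟨C⟩ := hca
  have hinj : Set.InjOn C (G.neighborFinset v) := by
    intro x hx y hy hxy
    by_contra hne
    rw [Finset.mem_coe, mem_neighborFinset] at hx hy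
    exact C.valid ⟨hne, v, hx.symm, hy.symm⟩ hxy
  calc G.degree v = (G.neighborFinset v).card := (card_neighborFinset_eq_degree _ _).symm
    _ = ((G.neighborFinset v).image C).card := (Finset.card_image_of_injOn hinj).symm
    _ ≤ (univ : Finset (Fin a)).card := Finset.card_le_card (Finset.subset_univ _)
    _ = a := by simp

/-- If every two distinct vertices have a common neighbor, any injective coloring is injective. -/
lemma card_le_of_forall_common (G : SimpleGraph V) {b : ℕ}
    (hcb : (commonNbrGraph G).Colorable b)
    (h : ∀ u v : V, u ≠ v → ∃ w, G.Adj u w ∧ G.Adj v w) : Fintype.card V ≤ b := by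
  obtain ⟨C⟩ := hcb
  have hinj : Function.Injective C := by
    intro u v huv
    by_contra hne
    exact C.valid ⟨hne, h u v hne⟩ huv
  calc Fintype.card V ≤ Fintype.card (Fin b) := Fintype.card_le_of_injective C hinj
    _ = b := Fintype.card_fin b

/-- Parity argument: a regular graph of odd order cannot have an injective coloring
with exactly (degree) colors. -/
lemma parity_contradiction (G : SimpleGraph V) [DecidableRel G.Adj] {d : ℕ}
    (hreg : ∀ v, G.degree v = d) (hc : (commonNbrGraph G).Colorable d)
    (hodd : Odd (Fintype.card V)) : False := by
  obtain ⟨C⟩ := hc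
  -- every vertex has exactly one neighbor of each color
  have hex : ∀ (v : V) (γ : Fin d), ∃ u, (G.Adj v u ∧ C u = γ) ∧
      ∀ u', G.Adj v u' → C u' = γ → u' = u := by
    intro v γ
    have hinj : Set.InjOn C (G.neighborFinset v) := by
      intro x hx y hy hxy
      by_contra hne
      rw [Finset.mem_coe, mem_neighborFinset] at hx hy
      exact C.valid ⟨hne, v, hx.symm, hy.symm⟩ hxy
    have himg : (G.neighborFinset v).image C = univ := by
      apply Finset.eq_univ_of_card
      rw [Finset.card_image_of_injOn hinj, card_neighborFinset_eq_degree, hreg, Fintype.card_fin]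
    have hγ : γ ∈ (G.neighborFinset v).image C := by rw [himg]; exact mem_univ γ
    obtain ⟨u, hu, hCu⟩ := Finset.mem_image.mp hγ
    rw [mem_neighborFinset] at hu
    refine ⟨u, ⟨hu, hCu⟩, fun u' hu' hCu' => ?_⟩
    exact hinj (by rw [Finset.mem_coe, mem_neighborFinset]; exact hu')
      (by rw [Finset.mem_coe, mem_neighborFinset]; exact hu) (by rw [hCu', hCu])
  choose f hf huniq using hex
  have heven : ∀ γ : Fin d, Even (univ.filter (fun v => C v = γ)).card := by
    intro γ
    apply even_of_involution _ (fun v _ => f v γ)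
    · intro v hv
      rw [Finset.mem_filter]
      exact ⟨mem_univ _, (hf v γ).2⟩
    · intro v hv
      have hmem := (Finset.mem_filter.mp hv).2
      exact (huniq (f v γ) γ v ((hf v γ).1).symm hmem).symm
    · intro v hv h
      have := (hf v γ).1
      rw [h] at this
      exact G.loopless.irrefl v this
  have hcards : Fintype.card V = ∑ γ : Fin d, (univ.filter (fun v => C v = γ)).card := by
    rw [← Finset.card_univ]
    exact Finset.card_eq_sum_card_fiberwise (fun x _ => mem_univ (C x))
  have : Even (Fintype.card V) := by
    rw [hcards]
    exact Finset.even_sum _ (fun γ _ => heven γ)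
  exact (Nat.not_even_iff_odd.mpr hodd) this

/-- The core case: `n = 2b+1`, `b ≥ 3`, min degree `≥ b`, and injective colorings with
`b+1` and `b` colors for `G` and its complement lead to a contradiction. -/
lemma core_case (G : SimpleGraph V) [DecidableRel G.Adj] {b : ℕ} (hb : 3 ≤ b)
    (hcard : Fintype.card V = 2 * b + 1)
    (hca : (commonNbrGraph G).Colorable (b + 1))
    (hcb : (commonNbrGraph Gᶜ).Colorable b)
    (hdeg : ∀ v, b ≤ G.degree v) : False := by
  obtain ⟨C⟩ := hca
  obtain ⟨C'⟩ := hcb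
  have nocommon : ∀ u v : V, u ≠ v → C u = C v → ¬ ∃ w, G.Adj u w ∧ G.Adj v w := by
    rintro u v hne hcc ⟨w, h1, h2⟩
    exact C.valid ⟨hne, w, h1, h2⟩ hcc
  have nocommon' : ∀ u v : V, u ≠ v → C' u = C' v → ¬ ∃ w, Gᶜ.Adj u w ∧ Gᶜ.Adj v w := by
    rintro u v hne hcc ⟨w, h1, h2⟩
    exact C'.valid ⟨hne, w, h1, h2⟩ hcc
  have fiber_adj : ∀ u v : V, u ≠ v → C u = C v → G.Adj u v := by
    intro u v hne hcc
    by_contra hnadj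
    exact nocommon u v hne hcc
      (common_of_not_adj G hne hnadj (by have := hdeg u; have := hdeg v; omega))
  set fib : Fin (b + 1) → Finset V := fun γ => univ.filter (fun v => C v = γ) with hfib
  have fib_card_le : ∀ γ, (fib γ).card ≤ 2 := by
    intro γ
    by_contra h
    push_neg at h
    obtain ⟨u, v, w, hu, hv, hw, huv, huw, hvw⟩ := Finset.two_lt_card_iff.mp h
    rw [hfib, Finset.mem_filter] at hu hv hw
    exact nocommon u w huw (hu.2.trans hw.2.symm)
      ⟨v, fiber_adj u v huv (hu.2.trans hv.2.symm),
        fiber_adj w v hvw.symm (hw.2.trans hv.2.symm)⟩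
  have card_sum : ∑ γ, (fib γ).card = 2 * b + 1 := by
    rw [← hcard, ← Finset.card_univ]
    exact (Finset.card_eq_sum_card_fiberwise (fun x _ => mem_univ (C x))).symm
  have hex1 : ∃ γ₀, (fib γ₀).card = 1 := by
    by_contra h
    push_neg at h
    have heven : ∀ γ : Fin (b+1), Even (fib γ).card := by
      intro γ
      have h1 := fib_card_le γ
      have h2 := h γ
      have : (fib γ).card = 0 ∨ (fib γ).card = 2 := by omega
      rcases this with h | h <;> rw [h] <;> decide
    have : Even (2 * b + 1) := card_sum ▸ Finset.even_sum _ (fun γ _ => heven γ)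
    rw [Nat.even_iff] at this
    omega
  obtain ⟨γ₀, hγ₀⟩ := hex1
  obtain ⟨z, hz⟩ := Finset.card_eq_one.mp hγ₀
  have hCz : C z = γ₀ := by
    have : z ∈ fib γ₀ := hz ▸ Finset.mem_singleton_self z
    exact (Finset.mem_filter.mp this).2
  have fiber_z : ∀ v, C v = γ₀ → v = z := by
    intro v hv
    have : v ∈ fib γ₀ := Finset.mem_filter.mpr ⟨mem_univ _, hv⟩
    rw [hz, Finset.mem_singleton] at this
    exact this
  have fib2 : ∀ γ, γ ≠ γ₀ → (fib γ).card = 2 := by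
    intro γ hγ
    by_contra h
    have hlt : (fib γ).card < 2 := lt_of_le_of_ne (fib_card_le γ) h
    have hsum' : ∑ δ ∈ univ.erase γ₀, (fib δ).card = 2 * b := by
      have h1 := card_sum
      rw [← Finset.add_sum_erase _ _ (mem_univ γ₀), hγ₀] at h1
      omega
    have hlt2 : ∑ δ ∈ univ.erase γ₀, (fib δ).card < ∑ _δ ∈ univ.erase γ₀, 2 :=
      Finset.sum_lt_sum (fun δ _ => fib_card_le δ)
        ⟨γ, Finset.mem_erase.mpr ⟨hγ, mem_univ _⟩, hlt⟩
    rw [Finset.sum_const, Finset.card_erase_of_mem (mem_univ _), Finset.card_univ,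
      Fintype.card_fin, smul_eq_mul] at hlt2
    omega
  -- z has at most one neighbor in each fiber; counting shows exactly one for γ ≠ γ₀
  have nbr_le : ∀ (w : V) (γ : Fin (b+1)), ((G.neighborFinset w).filter (fun v => C v = γ)).card ≤ 1 := by
    intro w γ
    by_contra h
    push_neg at h
    obtain ⟨u, v, hu, hv, huv⟩ := Finset.one_lt_card_iff.mp h
    rw [Finset.mem_filter, mem_neighborFinset] at hu hv
    exact nocommon u v huv (hu.2.trans hv.2.symm) ⟨w, hu.1.symm, hv.1.symm⟩
  have z_nbr : ∀ γ, γ ≠ γ₀ → ∃ u, G.Adj z u ∧ C u = γ := by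
    intro γ₁ hγ₁
    by_contra h
    push_neg at h
    have hf0 : ((G.neighborFinset z).filter (fun v => C v = γ₀)).card = 0 := by
      rw [Finset.card_eq_zero, Finset.eq_empty_iff_forall_notMem]
      intro u hu
      rw [Finset.mem_filter, mem_neighborFinset] at hu
      exact G.loopless.irrefl z (fiber_z u hu.2 ▸ hu.1)
    have hf1 : ((G.neighborFinset z).filter (fun v => C v = γ₁)).card = 0 := by
      rw [Finset.card_eq_zero, Finset.eq_empty_iff_forall_notMem]
      intro u hu
      rw [Finset.mem_filter, mem_neighborFinset] at hu
      exact h u hu.1 hu.2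
    have hdz : G.degree z = ∑ γ : Fin (b+1), ((G.neighborFinset z).filter (fun v => C v = γ)).card := by
      rw [← card_neighborFinset_eq_degree]
      exact Finset.card_eq_sum_card_fiberwise (fun x _ => mem_univ (C x))
    have hsplit : ∑ γ : Fin (b+1), ((G.neighborFinset z).filter (fun v => C v = γ)).card
        ≤ 0 + 0 + ((univ.erase γ₀).erase γ₁).card * 1 := by
      rw [← Finset.add_sum_erase _ _ (mem_univ γ₀), hf0,
        ← Finset.add_sum_erase _ _ (Finset.mem_erase.mpr ⟨hγ₁, mem_univ _⟩), hf1]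
      have := Finset.sum_le_card_nsmul ((univ.erase γ₀).erase γ₁)
        (fun γ => ((G.neighborFinset z).filter (fun v => C v = γ)).card) 1
        (fun γ _ => nbr_le z γ)
      rw [smul_eq_mul] at this
      omega
    have hc1 : ((univ.erase γ₀).erase γ₁).card = b - 1 := by
      rw [Finset.card_erase_of_mem (Finset.mem_erase.mpr ⟨hγ₁, mem_univ _⟩),
        Finset.card_erase_of_mem (mem_univ _), Finset.card_univ, Fintype.card_fin]
      omega
    have := hdeg z
    omega
  -- choose the pair (x γ, y γ) in each fiber γ ≠ γ₀, with x γ the neighbor of z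
  have pair : ∀ γ : Fin (b+1), ∃ p : V × V, γ ≠ γ₀ →
      C p.1 = γ ∧ C p.2 = γ ∧ p.1 ≠ p.2 ∧ G.Adj z p.1 ∧
      (∀ v, C v = γ → v = p.1 ∨ v = p.2) := by
    intro γ
    by_cases hγ : γ = γ₀
    · exact ⟨(z, z), fun h => absurd hγ h⟩
    obtain ⟨u, v, huv, huvfib⟩ := Finset.card_eq_two.mp (fib2 γ hγ)
    obtain ⟨xγ, hxγadj, hxγC⟩ := z_nbr γ hγ
    have hmem : ∀ w, C w = γ ↔ w = u ∨ w = v := by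
      intro w
      constructor
      · intro hw
        have : w ∈ fib γ := Finset.mem_filter.mpr ⟨mem_univ _, hw⟩
        rw [huvfib] at this
        simpa using this
      · intro hw
        have h1 : w ∈ fib γ := by rw [huvfib]; simpa using hw
        exact (Finset.mem_filter.mp h1).2
    rcases (hmem xγ).mp hxγC with h | h
    · exact ⟨(xγ, v), fun _ => ⟨hxγC, (hmem v).mpr (Or.inr rfl), h ▸ huv, hxγadj,
        fun w hw => ((hmem w).mp hw).imp (fun h' => h'.trans h.symm) id⟩⟩
    · exact ⟨(xγ, u), fun _ => ⟨hxγC, (hmem u).mpr (Or.inl rfl), h ▸ huv.symm, hxγadj,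
        fun w hw => ((hmem w).mp hw).symm.imp (fun h' => h'.trans h.symm) id⟩⟩
  choose p hp using pair
  set x : Fin (b+1) → V := fun γ => (p γ).1 with hxdef
  set y : Fin (b+1) → V := fun γ => (p γ).2 with hydef
  have hCx : ∀ γ, γ ≠ γ₀ → C (x γ) = γ := fun γ h => ((hp γ) h).1
  have hCy : ∀ γ, γ ≠ γ₀ → C (y γ) = γ := fun γ h => ((hp γ) h).2.1
  have hxy : ∀ γ, γ ≠ γ₀ → x γ ≠ y γ := fun γ h => ((hp γ) h).2.2.1
  have hzx : ∀ γ, γ ≠ γ₀ → G.Adj z (x γ) := fun γ h => ((hp γ) h).2.2.2.1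
  have hfibxy : ∀ γ, γ ≠ γ₀ → ∀ v, C v = γ → v = x γ ∨ v = y γ :=
    fun γ h => ((hp γ) h).2.2.2.2
  have hzy : ∀ γ, γ ≠ γ₀ → ¬ G.Adj z (y γ) := by
    intro γ hγ hadj
    have h2 : 1 < ((G.neighborFinset z).filter (fun v => C v = γ)).card := by
      apply Finset.one_lt_card_iff.mpr
      exact ⟨x γ, y γ, Finset.mem_filter.mpr ⟨(mem_neighborFinset _ _ _).mpr (hzx γ hγ), hCx γ hγ⟩,
        Finset.mem_filter.mpr ⟨(mem_neighborFinset _ _ _).mpr hadj, hCy γ hγ⟩, hxy γ hγ⟩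
    exact absurd (nbr_le z γ) (by omega)
  have hxz : ∀ γ, γ ≠ γ₀ → x γ ≠ z := by
    intro γ hγ h
    exact hγ (by rw [← hCx γ hγ, h, hCz])
  have hyz : ∀ γ, γ ≠ γ₀ → y γ ≠ z := by
    intro γ hγ h
    exact hγ (by rw [← hCy γ hγ, h, hCz])
  have hadjxy : ∀ γ, γ ≠ γ₀ → G.Adj (x γ) (y γ) := by
    intro γ hγ
    exact fiber_adj _ _ (hxy γ hγ) ((hCx γ hγ).trans (hCy γ hγ).symm)
  have hnc : ∀ γ, γ ≠ γ₀ → ¬ ∃ w, G.Adj (x γ) w ∧ G.Adj (y γ) w := by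
    intro γ hγ
    exact nocommon _ _ (hxy γ hγ) ((hCx γ hγ).trans (hCy γ hγ).symm)
  have xinj : ∀ γ δ, γ ≠ γ₀ → δ ≠ γ₀ → x γ = x δ → γ = δ := by
    intro γ δ hγ hδ h
    rw [← hCx γ hγ, h, hCx δ hδ]
  have yinj : ∀ γ δ, γ ≠ γ₀ → δ ≠ γ₀ → y γ = y δ → γ = δ := by
    intro γ δ hγ hδ h
    rw [← hCy γ hγ, h, hCy δ hδ]
  have xney : ∀ γ δ, γ ≠ γ₀ → δ ≠ γ₀ → x γ ≠ y δ := by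
    intro γ δ hγ hδ h
    by_cases hγδ : γ = δ
    · exact hxy γ hγ (hγδ ▸ h ▸ (hγδ ▸ rfl))
    · exact hγδ (by rw [← hCx γ hγ, h, hCy δ hδ])
  -- characterization of z's neighbors
  have adj_z : ∀ v, G.Adj z v → C v ≠ γ₀ ∧ v = x (C v) := by
    intro v hv
    have hvγ₀ : C v ≠ γ₀ := by
      intro h
      exact G.loopless.irrefl z ((fiber_z v h) ▸ hv)
    refine ⟨hvγ₀, ?_⟩
    rcases hfibxy (C v) hvγ₀ v rfl with h | h
    · exact h
    · exact absurd (h ▸ hv) (hzy (C v) hvγ₀)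
  have z_comp : ∀ γ, γ ≠ γ₀ → Gᶜ.Adj z (y γ) := by
    intro γ hγ
    exact ⟨(hyz γ hγ).symm, hzy γ hγ⟩
  -- surjectivity of C' on the y's
  have y_surj : ∀ κ : Fin b, ∃ γ, γ ≠ γ₀ ∧ C' (y γ) = κ := by
    intro κ
    have hinj : Set.InjOn (fun γ => C' (y γ)) (univ.erase γ₀) := by
      intro γ hγ δ hδ h
      by_contra hne
      have hγ' := (Finset.mem_erase.mp (Finset.mem_coe.mp hγ)).1
      have hδ' := (Finset.mem_erase.mp (Finset.mem_coe.mp hδ)).1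
      exact C'.valid ⟨fun hyy => hne (yinj γ δ hγ' hδ' hyy), z,
        (z_comp γ hγ').symm, (z_comp δ hδ').symm⟩ h
    have himg : ((univ.erase γ₀).image (fun γ => C' (y γ))) = univ := by
      apply Finset.eq_univ_of_card
      rw [Finset.card_image_of_injOn hinj, Finset.card_erase_of_mem (mem_univ _)]
      simp
    have hκ : κ ∈ ((univ.erase γ₀).image (fun γ => C' (y γ))) := himg ▸ mem_univ κ
    obtain ⟨γ, hγ, h⟩ := Finset.mem_image.mp hκ
    exact ⟨γ, (Finset.mem_erase.mp hγ).1, h⟩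
  obtain ⟨i, hi, hCyi⟩ := y_surj (C' z)
  have yi_adj : ∀ j, j ≠ γ₀ → j ≠ i → G.Adj (y i) (y j) := by
    intro j hj hji
    by_contra hnadj
    apply nocommon' z (y i) (hyz i hi).symm hCyi.symm
    exact ⟨y j, z_comp j hj, ⟨fun h => hji (yinj i j hi hj h).symm, hnadj⟩⟩
  -- generic: if y l is adjacent to all other y's then its neighborhood is exactly {x l} ∪ {y m}
  have genericN : ∀ l, l ≠ γ₀ → (∀ m, m ≠ γ₀ → m ≠ l → G.Adj (y l) (y m)) →
      ∀ v, G.Adj (y l) v → v = x l ∨ ∃ m, (m ≠ γ₀ ∧ m ≠ l) ∧ v = y m := by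
    intro l hl hfull v hv
    have hvz : v ≠ z := by rintro rfl; exact hzy l hl hv.symm
    have hδ : C v ≠ γ₀ := fun h => hvz (fiber_z v h)
    by_cases hvl : C v = l
    · rcases hfibxy l hl v hvl with h | h
      · exact Or.inl h
      · rw [h] at hv; exact absurd hv (G.loopless.irrefl (y l))
    · rcases hfibxy (C v) hδ v rfl with h | h
      · exfalso
        apply hnc (C v) hδ
        rw [h] at hv
        exact ⟨y l, hv.symm, (hfull (C v) hδ hvl).symm⟩
      · exact Or.inr ⟨C v, ⟨hδ, hvl⟩, h⟩
  have genericX : ∀ l, l ≠ γ₀ → (∀ m, m ≠ γ₀ → m ≠ l → G.Adj (y l) (y m)) →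
      ∀ m, m ≠ γ₀ → m ≠ l → ¬ G.Adj (x l) (y m) := by
    intro l hl hfull m hm hml hadj
    exact hnc l hl ⟨y m, hadj, hfull m hm hml⟩
  have Nyi := genericN i hi yi_adj
  have xi_y := genericX i hi yi_adj
  have yi_xj : ∀ j, j ≠ γ₀ → j ≠ i → Gᶜ.Adj (x j) (y i) := by
    intro j hj hji
    refine ⟨xney j i hj hi, fun hadj => ?_⟩
    rcases Nyi (x j) hadj.symm with h | ⟨m, ⟨hm, _⟩, h⟩
    · exact hji (xinj j i hj hi h)
    · exact xney j m hj hm h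
  -- surjectivity of C' on {z} ∪ {x j : j ≠ γ₀, i}
  have hT : ∃ w, (w = z ∨ ∃ j, (j ≠ γ₀ ∧ j ≠ i) ∧ w = x j) ∧ C' w = C' (x i) := by
    set T : Finset V := insert z (((univ.erase γ₀).erase i).image x) with hTdef
    have hmemT : ∀ w, w ∈ T → Gᶜ.Adj w (y i) := by
      intro w hw
      rcases Finset.mem_insert.mp hw with rfl | hw
      · exact z_comp i hi
      · obtain ⟨j, hj, rfl⟩ := Finset.mem_image.mp hw
        have hj1 := Finset.mem_erase.mp hj
        exact yi_xj j (Finset.mem_erase.mp hj1.2).1 hj1.1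
    have hinj : Set.InjOn C' T := by
      intro u hu v hv huv
      by_contra hne
      exact C'.valid ⟨hne, y i, hmemT u (Finset.mem_coe.mp hu),
        hmemT v (Finset.mem_coe.mp hv)⟩ huv
    have hxinjOn : Set.InjOn x ((univ.erase γ₀).erase i) := by
      intro γ hγ δ hδ h
      have hγ' := (Finset.mem_erase.mp (Finset.mem_erase.mp (Finset.mem_coe.mp hγ)).2).1
      have hδ' := (Finset.mem_erase.mp (Finset.mem_erase.mp (Finset.mem_coe.mp hδ)).2).1
      exact xinj γ δ hγ' hδ' h
    have hznotmem : z ∉ ((univ.erase γ₀).erase i).image x := by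
      intro hzmem
      obtain ⟨j, hj, h⟩ := Finset.mem_image.mp hzmem
      exact hxz j (Finset.mem_erase.mp (Finset.mem_erase.mp hj).2).1 h
    have hcardT : T.card = b := by
      rw [hTdef, Finset.card_insert_of_notMem hznotmem, Finset.card_image_of_injOn hxinjOn,
        Finset.card_erase_of_mem (Finset.mem_erase.mpr ⟨hi, mem_univ _⟩),
        Finset.card_erase_of_mem (mem_univ _), Finset.card_univ, Fintype.card_fin]
      omega
    have himg : T.image C' = univ := by
      apply Finset.eq_univ_of_card
      rw [Finset.card_image_of_injOn hinj, hcardT]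
      simp
    have hmem2 : C' (x i) ∈ T.image C' := himg ▸ mem_univ _
    obtain ⟨w, hw, hCw⟩ := Finset.mem_image.mp hmem2
    refine ⟨w, ?_, hCw⟩
    rcases Finset.mem_insert.mp hw with rfl | hw
    · exact Or.inl rfl
    · obtain ⟨j, hj, rfl⟩ := Finset.mem_image.mp hw
      have h1 := Finset.mem_erase.mp hj
      exact Or.inr ⟨j, ⟨(Finset.mem_erase.mp h1.2).1, h1.1⟩, rfl⟩
  obtain ⟨w, hw, hCw⟩ := hT
  have exj : ∃ j, j ≠ γ₀ ∧ j ≠ i := by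
    by_contra h
    push_neg at h
    have hsub : (univ : Finset (Fin (b+1))) ⊆ {γ₀, i} := by
      intro j _
      rcases eq_or_ne j γ₀ with rfl | hj
      · exact Finset.mem_insert_self _ _
      · rw [h j hj]; exact Finset.mem_insert_of_mem (Finset.mem_singleton_self i)
    have h1 := Finset.card_le_card hsub
    have h2 : ({γ₀, i} : Finset (Fin (b+1))).card ≤ 2 :=
      (Finset.card_insert_le _ _).trans (by simp)
    rw [Finset.card_univ, Fintype.card_fin] at h1
    omega
  have hCxz : C' (x i) ≠ C' z := by
    intro heq
    obtain ⟨j, hj, hji⟩ := exj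
    apply nocommon' (x i) z (hxz i hi) heq
    exact ⟨y j, ⟨xney i j hi hj, xi_y j hj hji⟩, z_comp j hj⟩
  rcases hw with rfl | ⟨j, ⟨hj, hji⟩, rfl⟩
  · exact hCxz hCw.symm
  obtain ⟨k, hk, hCyk⟩ := y_surj (C' (x i))
  have hki : k ≠ i := by
    intro h
    exact hCxz (by rw [← hCyk, h, hCyi])
  have yk_adj : ∀ m, m ≠ γ₀ → m ≠ k → G.Adj (y k) (y m) := by
    intro m hm hmk
    by_cases hmi : m = i
    · subst hmi; exact (yi_adj k hk hki).symm
    · by_contra hnadj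
      apply nocommon' (x i) (y k) (xney i k hi hk) hCyk.symm
      exact ⟨y m, ⟨xney i m hi hm, xi_y m hm hmi⟩,
        ⟨fun h => hmk (yinj k m hk hm h).symm, hnadj⟩⟩
  have Nyk := genericN k hk yk_adj
  have xk_y := genericX k hk yk_adj
  by_cases hjk : j = k
  · have exm : ∃ m, m ≠ γ₀ ∧ m ≠ i ∧ m ≠ j := by
      by_contra h
      push_neg at h
      have hsub : (univ : Finset (Fin (b+1))) ⊆ {γ₀, i, j} := by
        intro m _
        rcases eq_or_ne m γ₀ with rfl | hm
        · exact Finset.mem_insert_self _ _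
        rcases eq_or_ne m i with rfl | hmi
        · exact Finset.mem_insert_of_mem (Finset.mem_insert_self _ _)
        · rw [h m hm hmi]
          exact Finset.mem_insert_of_mem (Finset.mem_insert_of_mem (Finset.mem_singleton_self j))
      have h1 := Finset.card_le_card hsub
      have h2 : ({γ₀, i, j} : Finset (Fin (b+1))).card ≤ 3 :=
        (Finset.card_insert_le _ _).trans (by
          have := Finset.card_insert_le i ({j} : Finset (Fin (b+1)))
          simp only [Finset.card_singleton] at this ⊢
          omega)
      rw [Finset.card_univ, Fintype.card_fin] at h1
      omega
    obtain ⟨m, hm, hmi, hmj⟩ := exm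
    apply nocommon' (x i) (x j) (fun h => hji (xinj j i hj hi h.symm)) hCw.symm
    refine ⟨y m, ⟨xney i m hi hm, xi_y m hm hmi⟩, ⟨xney j m hj hm, ?_⟩⟩
    rw [hjk]
    exact xk_y m hm (by rw [← hjk]; exact hmj)
  · apply nocommon' (x i) (x j) (fun h => hji (xinj j i hj hi h.symm)) hCw.symm
    refine ⟨y k, ⟨xney i k hi hk, xi_y k hk hki⟩, ⟨xney j k hj hk, fun hadj => ?_⟩⟩
    rcases Nyk (x j) hadj.symm with h | ⟨m, ⟨hm2, _⟩, h⟩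
    · exact hjk (xinj j k hj hk h)
    · exact xney j m hj hm2 h

/-- Main combinatorial lemma: assuming injective colorings of `G` and `Gᶜ` with too few
total colors leads to a contradiction. -/
lemma main_nat (G : SimpleGraph V) [DecidableRel G.Adj] (hn : 7 ≤ Fintype.card V)
    (hodd : Odd (Fintype.card V)) {a b : ℕ}
    (hca : (commonNbrGraph G).Colorable a) (hcb : (commonNbrGraph Gᶜ).Colorable b)
    (hab : a + b ≤ Fintype.card V) : False := by
  have hV : Nonempty V := Fintype.card_pos_iff.mp (by omega)
  obtain ⟨v₀⟩ := hV
  have ha1 : 1 ≤ a := by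
    obtain ⟨C⟩ := hca
    exact Nat.lt_of_le_of_lt (Nat.zero_le _) (C v₀).isLt
  have hb1 : 1 ≤ b := by
    obtain ⟨C'⟩ := hcb
    exact Nat.lt_of_le_of_lt (Nat.zero_le _) (C' v₀).isLt
  have hA : ∀ v, G.degree v ≤ a := deg_le_of_colorable G hca
  have hB : ∀ v, Gᶜ.degree v ≤ b := deg_le_of_colorable Gᶜ hcb
  have hcompl : ∀ v : V, Gᶜ.degree v = Fintype.card V - 1 - G.degree v :=
    fun v => G.degree_compl v
  have hdlt : ∀ v, G.degree v < Fintype.card V := fun v => G.degree_lt_card_verts v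
  have hlow : ∀ v, Fintype.card V - 1 - b ≤ G.degree v := by
    intro v
    have h1 := hB v
    rw [hcompl] at h1
    have := hdlt v
    omega
  by_cases hd1 : 2 * a + 3 ≤ Fintype.card V
  · have hcom : ∀ u v : V, u ≠ v → ∃ w, Gᶜ.Adj u w ∧ Gᶜ.Adj v w := by
      intro u v huv
      apply common_of_big_deg Gᶜ huv
      have h1 := hA u
      have h2 := hA v
      have h3 := hcompl u
      have h4 := hcompl v
      have h5 := hdlt u
      have h6 := hdlt v
      omega
    have := card_le_of_forall_common Gᶜ hcb hcom
    omega
  by_cases hd2 : 2 * b + 3 ≤ Fintype.card V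
  · have hcom : ∀ u v : V, u ≠ v → ∃ w, G.Adj u w ∧ G.Adj v w := by
      intro u v huv
      apply common_of_big_deg G huv
      have h1 := hlow u
      have h2 := hlow v
      have h5 := hdlt u
      have h6 := hdlt v
      omega
    have := card_le_of_forall_common G hca hcom
    omega
  obtain ⟨m, hm⟩ := hodd
  have hm3 : 3 ≤ m := by omega
  have hablow : Fintype.card V - 1 ≤ a + b := by
    have h1 := hA v₀
    have h2 := hB v₀
    rw [hcompl] at h2
    have := hdlt v₀
    omega
  have hcases : (a = m ∧ b = m) ∨ (a = m + 1 ∧ b = m) ∨ (a = m ∧ b = m + 1) := by omega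
  rcases hcases with ⟨ha', hb'⟩ | ⟨ha', hb'⟩ | ⟨ha', hb'⟩
  · -- G is m-regular
    have hreg : ∀ v, G.degree v = a := by
      intro v
      have h1 := hA v
      have h2 := hlow v
      omega
    exact parity_contradiction G hreg hca ⟨m, by omega⟩
  · exact core_case G (b := m) hm3 (by omega) (ha' ▸ hca) (hb' ▸ hcb)
      (fun v => by have := hlow v; omega)
  · apply core_case Gᶜ (b := m) hm3 (by omega) (hb' ▸ hcb) ?_ ?_
    · have h : Gᶜᶜ = G := compl_compl G
      rw [h]
      exact ha' ▸ hca
    · intro v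
      rw [hcompl]
      have := hA v
      have := hdlt v
      omega

end Helpers

theorem chiInj_nordhaus_gaddum_odd {V : Type*} [Fintype V] (G : SimpleGraph V)
    (hn : 7 ≤ Fintype.card V) (hodd : Odd (Fintype.card V)) :
    (Fintype.card V : ℕ∞) + 1 ≤ chiInj G + chiInj Gᶜ ∧
      chiInj G + chiInj Gᶜ ≤ 2 * (Fintype.card V : ℕ∞) := by
  classical
  have hcolG : (commonNbrGraph G).Colorable (Fintype.card V) :=
    (commonNbrGraph G).colorable_of_fintype
  have hcolG' : (commonNbrGraph Gᶜ).Colorable (Fintype.card V) :=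
    (commonNbrGraph Gᶜ).colorable_of_fintype
  have hle1 : chiInj G ≤ (Fintype.card V : ℕ∞) := hcolG.chromaticNumber_le
  have hle2 : chiInj Gᶜ ≤ (Fintype.card V : ℕ∞) := hcolG'.chromaticNumber_le
  constructor
  · by_contra hlt
    push_neg at hlt
    have hne1 : chiInj G ≠ ⊤ := fun h => by
      rw [h] at hle1
      exact absurd (top_le_iff.mp hle1) (by simp)
    have hne2 : chiInj Gᶜ ≠ ⊤ := fun h => by
      rw [h] at hle2
      exact absurd (top_le_iff.mp hle2) (by simp)
    lift chiInj G to ℕ using hne1 with a ha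
    lift chiInj Gᶜ to ℕ using hne2 with b hb
    have hab : a + b ≤ Fintype.card V := by
      have : ((a + b : ℕ) : ℕ∞) < ((Fintype.card V + 1 : ℕ) : ℕ∞) := by
        push_cast
        exact hlt
      exact_mod_cast Nat.lt_succ_iff.mp (by exact_mod_cast this)
    have hca : (commonNbrGraph G).Colorable a :=
      chromaticNumber_le_iff_colorable.mp (le_of_eq ha.symm)
    have hcb : (commonNbrGraph Gᶜ).Colorable b :=
      chromaticNumber_le_iff_colorable.mp (le_of_eq hb.symm)
    exact main_nat G hn hodd hca hcb hab
  · calc chiInj G + chiInj Gᶜ ≤ (Fintype.card V : ℕ∞) + (Fintype.card V : ℕ∞) :=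
        add_le_add hle1 hle2
      _ = 2 * (Fintype.card V : ℕ∞) := (two_mul _).symm
end

section
/- Let G be a finite simple graph of order n ≥ 5. Then n ≤ χᵢ(G) · χᵢ(Ḡ) ≤ n². -/
open SimpleGraph

lemma arith_helper {n p q a b : ℕ} (hn : 5 ≤ n) (hpq : n ≤ p + q + 2)
    (h1 : p + 1 ≤ a) (h2 : q + 1 ≤ a) (h3 : p ≤ b) (h4 : q ≤ b) : n ≤ a * b := by
  rcases Nat.le_total p q with h | h
  · have h5 : 2 ≤ q := by omega
    calc n ≤ (q + 1) * q := by nlinarith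
      _ ≤ a * b := Nat.mul_le_mul h2 h4
  · have h5 : 2 ≤ p := by omega
    calc n ≤ (p + 1) * p := by nlinarith
      _ ≤ a * b := Nat.mul_le_mul h1 h3

/-- A set pairwise adjacent in `H` needs as many colors as its size. -/
lemma clique_card_le_of_coloring {V : Type*} {H : SimpleGraph V} {n : ℕ}
    (C : H.Coloring (Fin n)) (W : Finset V)
    (h : ∀ x ∈ W, ∀ y ∈ W, x ≠ y → H.Adj x y) : W.card ≤ n := by
  classical
  have := Finset.card_le_card_of_injOn (f := fun v => C v)
    (fun x _ => Finset.mem_univ (C x))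
    (fun x hx y hy hxy => by
      by_contra hne
      exact C.valid (h x hx y hy hne) hxy)
  simpa using this

theorem chiInj_nordhaus_gaddum_prod {V : Type*} [Fintype V] (G : SimpleGraph V)
    (hn : 5 ≤ Fintype.card V) :
    (Fintype.card V : ℕ∞) ≤ chiInj G * chiInj Gᶜ ∧
      chiInj G * chiInj Gᶜ ≤ (Fintype.card V : ℕ∞) ^ 2 := by
  classical
  set n := Fintype.card V with hncard
  -- finiteness of the chromatic numbers
  have hcolG : (commonNbrGraph G).Colorable n := (commonNbrGraph G).colorable_of_fintype
  have hcolG' : (commonNbrGraph Gᶜ).Colorable n := (commonNbrGraph Gᶜ).colorable_of_fintype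
  have hneG : chiInj G ≠ ⊤ := by
    rw [chiInj, SimpleGraph.chromaticNumber_ne_top_iff_exists]; exact ⟨n, hcolG⟩
  have hneG' : chiInj Gᶜ ≠ ⊤ := by
    rw [chiInj, SimpleGraph.chromaticNumber_ne_top_iff_exists]; exact ⟨n, hcolG'⟩
  set a := (chiInj G).toNat with ha
  set b := (chiInj Gᶜ).toNat with hb
  have hGa : chiInj G = (a : ℕ∞) := (ENat.coe_toNat hneG).symm
  have hGb : chiInj Gᶜ = (b : ℕ∞) := (ENat.coe_toNat hneG').symm
  have hca : (commonNbrGraph G).Colorable a :=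
    SimpleGraph.colorable_chromaticNumber hcolG
  have hcb : (commonNbrGraph Gᶜ).Colorable b :=
    SimpleGraph.colorable_chromaticNumber hcolG'
  obtain ⟨CA⟩ := hca
  obtain ⟨CB⟩ := hcb
  constructor
  · -- lower bound
    have key : n ≤ a * b := by
      by_cases h : ∀ u v : V, u ≠ v →
          (∃ w, G.Adj u w ∧ G.Adj v w) ∨ (∃ w, Gᶜ.Adj u w ∧ Gᶜ.Adj v w)
      · -- the pair of colorings is injective
        have hinj : Function.Injective (fun v => (CA v, CB v)) := by
          intro u v huv
          by_contra hne
          have h1 : CA u = CA v := congrArg Prod.fst huv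
          have h2 : CB u = CB v := congrArg Prod.snd huv
          rcases h u v hne with ⟨w, hw⟩ | ⟨w, hw⟩
          · exact CA.valid (show (commonNbrGraph G).Adj u v from ⟨hne, w, hw⟩) h1
          · exact CB.valid (show (commonNbrGraph Gᶜ).Adj u v from ⟨hne, w, hw⟩) h2
        calc n ≤ Fintype.card (Fin a × Fin b) := Fintype.card_le_of_injective _ hinj
          _ = a * b := by simp
      · push_neg at h
        obtain ⟨u, v, huv, h1, h2⟩ := h
        -- A = neighbors of u other than v, B = neighbors of v other than u
        set A : Finset V := Finset.univ.filter (fun w => G.Adj u w ∧ w ≠ v) with hA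
        set B : Finset V := Finset.univ.filter (fun w => G.Adj v w ∧ w ≠ u) with hB
        have hAmem : ∀ w, w ∈ A ↔ G.Adj u w ∧ w ≠ v := by
          intro w; simp [hA]
        have hBmem : ∀ w, w ∈ B ↔ G.Adj v w ∧ w ≠ u := by
          intro w; simp [hB]
        -- no common neighbor of u and v in G
        have hnc : ∀ w, ¬(G.Adj u w ∧ G.Adj v w) := by
          intro w hw; exact (h1 w) hw.1 hw.2
        -- cover: every vertex is in A ∪ B ∪ {u, v}
        have hcover : (Finset.univ : Finset V) ⊆ A ∪ B ∪ {u, v} := by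
          intro w _
          by_cases hwu : w = u
          · subst hwu; simp
          by_cases hwv : w = v
          · subst hwv; simp
          have hadj : G.Adj u w ∨ G.Adj v w := by
            by_contra hcon
            push_neg at hcon
            exact (h2 w) ((G.compl_adj u w).2 ⟨Ne.symm hwu, hcon.1⟩)
              ((G.compl_adj v w).2 ⟨Ne.symm hwv, hcon.2⟩)
          rcases hadj with hadj | hadj
          · exact Finset.mem_union_left _ (Finset.mem_union_left _ ((hAmem w).2 ⟨hadj, hwv⟩))
          · exact Finset.mem_union_left _ (Finset.mem_union_right _ ((hBmem w).2 ⟨hadj, hwu⟩))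
        set p := A.card with hp
        set q := B.card with hq
        have hpq : n ≤ p + q + 2 := by
          calc n = (Finset.univ : Finset V).card := (Finset.card_univ).symm
            _ ≤ (A ∪ B ∪ {u, v}).card := Finset.card_le_card hcover
            _ ≤ (A ∪ B).card + ({u, v} : Finset V).card := Finset.card_union_le _ _
            _ ≤ (A.card + B.card) + ({u, v} : Finset V).card := by
                exact Nat.add_le_add_right (Finset.card_union_le _ _) _
            _ ≤ p + q + 2 := by
                have : ({u, v} : Finset V).card ≤ 2 := Finset.card_insert_le u {v}
                omega
        -- A is a clique in commonNbrGraph G (common neighbor u)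
        have hAG : p ≤ a := by
          apply clique_card_le_of_coloring CA
          intro x hx y hy hxy
          obtain ⟨hxu, -⟩ := (hAmem x).1 hx
          obtain ⟨hyu, -⟩ := (hAmem y).1 hy
          exact ⟨hxy, u, hxu.symm, hyu.symm⟩
        have hBG : q ≤ a := by
          apply clique_card_le_of_coloring CA
          intro x hx y hy hxy
          obtain ⟨hxv, -⟩ := (hBmem x).1 hx
          obtain ⟨hyv, -⟩ := (hBmem y).1 hy
          exact ⟨hxy, v, hxv.symm, hyv.symm⟩
        -- A is a clique in commonNbrGraph Gᶜ (common neighbor v)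
        have hAv : ∀ x ∈ A, Gᶜ.Adj x v := by
          intro x hx
          obtain ⟨hxu, hxv⟩ := (hAmem x).1 hx
          exact (G.compl_adj x v).2 ⟨hxv, fun hcon => hnc x ⟨hxu, hcon.symm⟩⟩
        have hBu : ∀ x ∈ B, Gᶜ.Adj x u := by
          intro x hx
          obtain ⟨hxv, hxu⟩ := (hBmem x).1 hx
          exact (G.compl_adj x u).2 ⟨hxu, fun hcon => hnc x ⟨hcon.symm, hxv⟩⟩
        have hAG' : p ≤ b := by
          apply clique_card_le_of_coloring CB
          intro x hx y hy hxy
          exact ⟨hxy, v, hAv x hx, hAv y hy⟩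
        have hBG' : q ≤ b := by
          apply clique_card_le_of_coloring CB
          intro x hx y hy hxy
          exact ⟨hxy, u, hBu x hx, hBu y hy⟩
        by_cases hadj : G.Adj u v
        · -- A ∪ {v} and B ∪ {u} are cliques in commonNbrGraph G
          have hvA : v ∉ A := by
            intro hcon; exact ((hAmem v).1 hcon).2 rfl
          have huB : u ∉ B := by
            intro hcon; exact ((hBmem u).1 hcon).2 rfl
          have hA1 : p + 1 ≤ a := by
            have hc : (insert v A).card ≤ a := by
              apply clique_card_le_of_coloring CA
              intro x hx y hy hxy
              refine ⟨hxy, u, ?_, ?_⟩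
              · rcases Finset.mem_insert.1 hx with rfl | hx
                · exact hadj.symm
                · exact ((hAmem x).1 hx).1.symm
              · rcases Finset.mem_insert.1 hy with rfl | hy
                · exact hadj.symm
                · exact ((hAmem y).1 hy).1.symm
            rw [Finset.card_insert_of_notMem hvA] at hc; exact hc
          have hB1 : q + 1 ≤ a := by
            have hc : (insert u B).card ≤ a := by
              apply clique_card_le_of_coloring CA
              intro x hx y hy hxy
              refine ⟨hxy, v, ?_, ?_⟩
              · rcases Finset.mem_insert.1 hx with rfl | hx
                · exact hadj
                · exact ((hBmem x).1 hx).1.symm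
              · rcases Finset.mem_insert.1 hy with rfl | hy
                · exact hadj
                · exact ((hBmem y).1 hy).1.symm
            rw [Finset.card_insert_of_notMem huB] at hc; exact hc
          exact arith_helper hn hpq hA1 hB1 hAG' hBG'
        · -- u ~ v in Gᶜ : A ∪ {u} and B ∪ {v} are cliques in commonNbrGraph Gᶜ
          have huv' : Gᶜ.Adj u v := (G.compl_adj u v).2 ⟨huv, hadj⟩
          have huA : u ∉ A := by
            intro hcon; exact G.loopless.irrefl u ((hAmem u).1 hcon).1
          have hvB : v ∉ B := by
            intro hcon; exact G.loopless.irrefl v ((hBmem v).1 hcon).1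
          have hA1 : p + 1 ≤ b := by
            have hc : (insert u A).card ≤ b := by
              apply clique_card_le_of_coloring CB
              intro x hx y hy hxy
              refine ⟨hxy, v, ?_, ?_⟩
              · rcases Finset.mem_insert.1 hx with rfl | hx
                · exact huv'
                · exact hAv x hx
              · rcases Finset.mem_insert.1 hy with rfl | hy
                · exact huv'
                · exact hAv y hy
            rw [Finset.card_insert_of_notMem huA] at hc; exact hc
          have hB1 : q + 1 ≤ b := by
            have hc : (insert v B).card ≤ b := by
              apply clique_card_le_of_coloring CB
              intro x hx y hy hxy
              refine ⟨hxy, u, ?_, ?_⟩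
              · rcases Finset.mem_insert.1 hx with rfl | hx
                · exact huv'.symm
                · exact hBu x hx
              · rcases Finset.mem_insert.1 hy with rfl | hy
                · exact huv'.symm
                · exact hBu y hy
            rw [Finset.card_insert_of_notMem hvB] at hc; exact hc
          rw [Nat.mul_comm]
          exact arith_helper hn hpq hA1 hB1 hAG hBG
    calc (n : ℕ∞) ≤ ((a * b : ℕ) : ℕ∞) := by exact_mod_cast key
      _ = chiInj G * chiInj Gᶜ := by rw [hGa, hGb]; push_cast; ring
  · -- upper bound
    have h1 : chiInj G ≤ (n : ℕ∞) := hcolG.chromaticNumber_le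
    have h2 : chiInj Gᶜ ≤ (n : ℕ∞) := hcolG'.chromaticNumber_le
    calc chiInj G * chiInj Gᶜ ≤ (n : ℕ∞) * (n : ℕ∞) := mul_le_mul' h1 h2
      _ = (n : ℕ∞) ^ 2 := (sq (n : ℕ∞)).symm
end

section
/- For every integer k ≥ 3, the complete bipartite graph K_{k+1,k} of order n = 2k+1 satisfies χᵢ(K_{k+1,k}) + χᵢ(complement of K_{k+1,k}) = 2k + 2 = n + 1. -/
open SimpleGraph

lemma exists_third {m : ℕ} (hm : 3 ≤ m) (a b : Fin m) : ∃ c : Fin m, c ≠ a ∧ c ≠ b := by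
  have : (({a, b} : Finset (Fin m))ᶜ).Nonempty := by
    rw [← Finset.card_pos, Finset.card_compl]
    have h2 : ({a, b} : Finset (Fin m)).card ≤ 2 :=
      (Finset.card_insert_le _ _).trans (by simp)
    simp only [Fintype.card_fin]
    omega
  obtain ⟨c, hc⟩ := this
  simp [Finset.mem_compl, Finset.mem_insert] at hc
  exact ⟨c, hc.1, hc.2⟩

lemma lemA (k : ℕ) (hk : 3 ≤ k) :
    commonNbrGraph (completeBipartiteGraph (Fin (k + 1)) (Fin k))
      = (completeBipartiteGraph (Fin (k + 1)) (Fin k))ᶜ := by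
  have hk0 : 0 < k := by omega
  ext u v
  constructor
  · rintro ⟨huv, w, h1, h2⟩
    refine ⟨huv, ?_⟩
    rcases u with a | a <;> rcases v with b | b <;> rcases w with c | c <;>
      simp_all [completeBipartiteGraph]
  · rintro ⟨huv, h⟩
    refine ⟨huv, ?_⟩
    rcases u with a | a <;> rcases v with b | b
    · exact ⟨Sum.inr ⟨0, hk0⟩, by simp [completeBipartiteGraph], by simp [completeBipartiteGraph]⟩
    · simp [completeBipartiteGraph] at h
    · simp [completeBipartiteGraph] at h
    · exact ⟨Sum.inl 0, by simp [completeBipartiteGraph], by simp [completeBipartiteGraph]⟩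

lemma lemB (k : ℕ) (hk : 3 ≤ k) :
    commonNbrGraph (completeBipartiteGraph (Fin (k + 1)) (Fin k))ᶜ
      = (completeBipartiteGraph (Fin (k + 1)) (Fin k))ᶜ := by
  ext u v
  constructor
  · rintro ⟨huv, w, h1, h2⟩
    rw [compl_adj] at h1 h2 ⊢
    refine ⟨huv, ?_⟩
    rcases u with a | a <;> rcases v with b | b <;> rcases w with c | c <;>
      simp_all [completeBipartiteGraph]
  · rintro ⟨huv, h⟩
    refine ⟨huv, ?_⟩
    rcases u with a | a <;> rcases v with b | b
    · obtain ⟨c, hca, hcb⟩ := exists_third (by omega : 3 ≤ k + 1) a b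
      exact ⟨Sum.inl c, by simp [completeBipartiteGraph, compl_adj, hca.symm],
        by simp [completeBipartiteGraph, compl_adj, hcb.symm]⟩
    · simp [completeBipartiteGraph] at h
    · simp [completeBipartiteGraph] at h
    · obtain ⟨c, hca, hcb⟩ := exists_third hk a b
      exact ⟨Sum.inr c, by simp [completeBipartiteGraph, compl_adj, hca.symm],
        by simp [completeBipartiteGraph, compl_adj, hcb.symm]⟩

lemma lemC (k : ℕ) :
    ((completeBipartiteGraph (Fin (k + 1)) (Fin k))ᶜ).chromaticNumber = (k + 1 : ℕ) := by
  apply le_antisymm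
  · rw [chromaticNumber_le_iff_colorable]
    refine ⟨Sum.elim id Fin.castSucc, ?_⟩
    rintro (a | a) (b | b) hab <;>
      simp_all [completeBipartiteGraph, compl_adj, Fin.castSucc_inj]
  · have hcl : ((completeBipartiteGraph (Fin (k + 1)) (Fin k))ᶜ).IsClique
        ((Finset.univ.image Sum.inl : Finset (Fin (k+1) ⊕ Fin k)) : Set _) := by
      intro x hx y hy hxy
      simp only [Finset.coe_image, Set.mem_image] at hx hy
      obtain ⟨a, -, rfl⟩ := hx
      obtain ⟨b, -, rfl⟩ := hy
      simp [completeBipartiteGraph, compl_adj, hxy]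
    have := hcl.card_le_chromaticNumber
    rwa [Finset.card_image_of_injective _ Sum.inl_injective, Finset.card_univ,
      Fintype.card_fin] at this

theorem chiInj_completeBipartite_odd (k : ℕ) (hk : 3 ≤ k) :
    chiInj (completeBipartiteGraph (Fin (k + 1)) (Fin k))
      + chiInj (completeBipartiteGraph (Fin (k + 1)) (Fin k))ᶜ = (2 * k : ℕ∞) + 2 := by
  unfold chiInj
  rw [lemA k hk, lemB k hk, lemC k]
  push_cast
  ring
end

section
/- For every integer n ≥ 9 there exists a finite simple graph G of order n such that every two distinct vertices of G have a common neighbor in G and every two distinct vertices of Ḡ have a common neighbor in Ḡ; consequently χᵢ(G) + χᵢ(Ḡ) = 2n and χᵢ(G) · χᵢ(Ḡ) = n². -/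
open SimpleGraph

def clG (k a : ℕ) : ℕ := if a < k then 0 else if a < 2*k then 1 else 2
def idxG (k a : ℕ) : ℕ := if a < k then a else if a < 2*k then a - k else a - 2*k
def relG (k a b : ℕ) : Prop := clG k a = clG k b ∨ idxG k a = idxG k b

lemma relG_symm {k a b : ℕ} (h : relG k a b) : relG k b a := h.imp Eq.symm Eq.symm

lemma pick2 (x y : ℕ) : ∃ r, r < 3 ∧ r ≠ x ∧ r ≠ y :=
  ⟨if 0 ≠ x ∧ 0 ≠ y then 0 else if 1 ≠ x ∧ 1 ≠ y then 1 else 2, by split_ifs <;> omega⟩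

lemma mkvert (k c i : ℕ) (hc : c < 3) (hi : i < k) :
    clG k (k*c+i) = c ∧ idxG k (k*c+i) = i := by
  interval_cases c <;> (simp only [clG, idxG]; constructor <;> split_ifs <;> omega)

lemma decompG (k a : ℕ) (ha : a < 3*k+2) :
    a = k * clG k a + idxG k a ∧ clG k a < 3 ∧ (clG k a < 2 → idxG k a < k) := by
  simp only [clG, idxG]
  split_ifs <;> omega

lemma mulle (k c : ℕ) (hc : c < 3) : k * c ≤ 2 * k := by
  interval_cases c <;> omega

lemma key (k a b n : ℕ) (hk : 3 ≤ k) (h3 : 3*k ≤ n) (h32 : n ≤ 3*k+2)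
    (ha : a < n) (hb : b < n) (hab : a ≠ b) :
    ∃ c < n, c ≠ a ∧ c ≠ b ∧ relG k a c ∧ relG k b c := by
  obtain ⟨ea, ca3, hia⟩ := decompG k a (by omega)
  obtain ⟨eb, cb3, hib⟩ := decompG k b (by omega)
  by_cases hc : clG k a = clG k b
  · obtain ⟨r, hr3, hra, hrb⟩ := pick2 (idxG k a) (idxG k b)
    obtain ⟨hw1, hw2⟩ := mkvert k (clG k a) r ca3 (by omega)
    have hm := mulle k (clG k a) ca3
    refine ⟨k * clG k a + r, by omega, by omega, by rw [hc] at ea ⊢; omega,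
      Or.inl hw1.symm, Or.inl (hc ▸ hw1.symm)⟩
  · by_cases hi : idxG k a = idxG k b
    · have hiak : idxG k a < k := by
        rcases Nat.lt_or_ge (clG k a) 2 with h | h
        · exact hia h
        · exact hi ▸ hib (by omega)
      obtain ⟨hw1, hw2⟩ := mkvert k (3 - clG k a - clG k b) (idxG k a) (by omega) hiak
      have hm := mulle k (3 - clG k a - clG k b) (by omega)
      refine ⟨k * (3 - clG k a - clG k b) + idxG k a, by omega,
        fun h => hc ?_, fun h => hc ?_, Or.inr hw2.symm, Or.inr (hi ▸ hw2.symm)⟩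
      · rw [h] at hw1; omega
      · rw [h] at hw1; omega
    · by_cases hlt : idxG k a < k
      · obtain ⟨hw1, hw2⟩ := mkvert k (clG k b) (idxG k a) cb3 hlt
        have hm := mulle k (clG k b) cb3
        refine ⟨k * clG k b + idxG k a, by omega, fun h => hc ?_,
          fun h => hi ?_, Or.inr hw2.symm, Or.inl hw1.symm⟩
        · rw [h] at hw1; omega
        · rw [h] at hw2; omega
      · have hca2 : clG k a = 2 := by by_contra h; exact hlt (hia (by omega))
        have hibk : idxG k b < k := hib (by omega)
        obtain ⟨hw1, hw2⟩ := mkvert k 2 (idxG k b) (by omega) hibk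
        refine ⟨k * 2 + idxG k b, by omega, fun h => hi ?_,
          fun h => hc ?_, Or.inl (by rw [hw1, hca2]), Or.inr hw2.symm⟩
        · rw [h] at hw2; omega
        · rw [h] at hw1; omega

lemma keyC (k a b n : ℕ) (hk : 3 ≤ k) (h3 : 3*k ≤ n) (h32 : n ≤ 3*k+2)
    (ha : a < n) (hb : b < n) :
    ∃ c < n, c ≠ a ∧ c ≠ b ∧ ¬relG k a c ∧ ¬relG k b c := by
  obtain ⟨ea, ca3, hia⟩ := decompG k a (by omega)
  obtain ⟨eb, cb3, hib⟩ := decompG k b (by omega)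
  obtain ⟨c3, hc33, hc3a, hc3b⟩ := pick2 (clG k a) (clG k b)
  obtain ⟨r, hr3, hra, hrb⟩ := pick2 (idxG k a) (idxG k b)
  obtain ⟨hw1, hw2⟩ := mkvert k c3 r hc33 (by omega)
  have hm := mulle k c3 hc33
  refine ⟨k * c3 + r, by omega, fun h => hc3a ?_, fun h => hc3b ?_, ?_, ?_⟩
  · rw [h] at hw1; omega
  · rw [h] at hw1; omega
  · rintro (h | h) <;> [exact hc3a (hw1 ▸ h.symm ▸ rfl); exact hra (hw2 ▸ h.symm ▸ rfl)]
  · rintro (h | h) <;> [exact hc3b (hw1 ▸ h.symm ▸ rfl); exact hrb (hw2 ▸ h.symm ▸ rfl)]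

theorem exists_chiInj_extremal (n : ℕ) (hn : 9 ≤ n) :
    ∃ G : SimpleGraph (Fin n),
      (∀ u v : Fin n, u ≠ v → ∃ w, G.Adj u w ∧ G.Adj v w) ∧
      (∀ u v : Fin n, u ≠ v → ∃ w, Gᶜ.Adj u w ∧ Gᶜ.Adj v w) ∧
      chiInj G + chiInj Gᶜ = 2 * (n : ℕ∞) ∧
      chiInj G * chiInj Gᶜ = (n : ℕ∞) ^ 2 := by
  set k := n / 3 with hkdef
  have hk : 3 ≤ k := by omega
  have h3 : 3 * k ≤ n := by omega
  have h32 : n ≤ 3 * k + 2 := by omega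
  set G : SimpleGraph (Fin n) :=
    { Adj := fun u v => u ≠ v ∧ relG k u.1 v.1
      symm := by constructor; rintro u v ⟨h, hr⟩; exact ⟨h.symm, relG_symm hr⟩
      loopless := by constructor; rintro v ⟨h, -⟩; exact h rfl } with hGdef
  have hAdj : ∀ u v : Fin n, G.Adj u v ↔ u ≠ v ∧ relG k u.1 v.1 := fun u v => Iff.rfl
  have hprop : ∀ u v : Fin n, u ≠ v → ∃ w, G.Adj u w ∧ G.Adj v w := by
    intro u v huv
    obtain ⟨c, hc, hca, hcb, hra, hrb⟩ := key k u.1 v.1 n hk h3 h32 u.2 v.2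
      (fun h => huv (Fin.ext h))
    exact ⟨⟨c, hc⟩, (hAdj u ⟨c, hc⟩).2 ⟨fun h => hca (congrArg Fin.val h).symm, hra⟩,
      (hAdj v ⟨c, hc⟩).2 ⟨fun h => hcb (congrArg Fin.val h).symm, hrb⟩⟩
  have hpropC : ∀ u v : Fin n, u ≠ v → ∃ w, Gᶜ.Adj u w ∧ Gᶜ.Adj v w := by
    intro u v huv
    obtain ⟨c, hc, hca, hcb, hra, hrb⟩ := keyC k u.1 v.1 n hk h3 h32 u.2 v.2
    refine ⟨⟨c, hc⟩, ⟨fun h => hca (congrArg Fin.val h).symm, ?_⟩,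
      ⟨fun h => hcb (congrArg Fin.val h).symm, ?_⟩⟩
    · exact fun h => hra ((hAdj u ⟨c, hc⟩).1 h).2
    · exact fun h => hrb ((hAdj v ⟨c, hc⟩).1 h).2
  have hcn : commonNbrGraph G = ⊤ := by
    ext u v
    simp only [commonNbrGraph, top_adj]
    exact ⟨fun h => h.1, fun h => ⟨h, hprop u v h⟩⟩
  have hcnC : commonNbrGraph Gᶜ = ⊤ := by
    ext u v
    simp only [commonNbrGraph, top_adj]
    exact ⟨fun h => h.1, fun h => ⟨h, hpropC u v h⟩⟩
  have h1 : chiInj G = (n : ℕ∞) := by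
    rw [chiInj, hcn, chromaticNumber_top, Fintype.card_fin]
  have h2 : chiInj Gᶜ = (n : ℕ∞) := by
    rw [chiInj, hcnC, chromaticNumber_top, Fintype.card_fin]
  exact ⟨G, hprop, hpropC, by rw [h1, h2, two_mul], by rw [h1, h2, sq]⟩
end

section
/- Every finite simple graph G whose order n satisfies 1 < n < 9 has χᵢ(G) + χᵢ(Ḡ) < 2n. -/
open SimpleGraph Finset

/-- A graph with a non-adjacent pair of distinct vertices has chromatic number
at most `card V - 1`. -/
lemma chrom_le_pred_aux {V : Type*} [Fintype V] (H : SimpleGraph V) {u v : V} (hne : u ≠ v)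
    (hnadj : ¬ H.Adj u v) : H.chromaticNumber ≤ ((Fintype.card V - 1 : ℕ) : ℕ∞) := by
  classical
  have C : H.Coloring {x : V // x ≠ v} := by
    refine Coloring.mk (fun x => if h : x = v then ⟨u, hne⟩ else ⟨x, h⟩) ?_
    intro x y hxy
    by_cases hx : x = v <;> by_cases hy : y = v
    · exact absurd (hx ▸ hy ▸ hxy) (H.irrefl)
    · simp only [dif_pos hx, dif_neg hy, ne_eq, Subtype.mk.injEq]
      rintro rfl
      exact hnadj (H.adj_symm (hx ▸ hxy))
    · simp only [dif_neg hx, dif_pos hy, ne_eq, Subtype.mk.injEq]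
      rintro rfl
      exact hnadj (hy ▸ hxy)
    · simp only [dif_neg hx, dif_neg hy, ne_eq, Subtype.mk.injEq]
      exact hxy.ne
  have h := C.colorable.chromaticNumber_le
  have hcard : Fintype.card {x : V // x ≠ v} = Fintype.card V - 1 := by
    simp [Fintype.card_subtype_compl]
  rwa [hcard] at h

/-- In a graph where every two distinct vertices have a common neighbor and whose
complement also has this property, every vertex has degree at least 3. -/
lemma deg_ge_three_aux {V : Type*} [Fintype V] [DecidableEq V] (G : SimpleGraph V)
    [DecidableRel G.Adj]
    (hP : ∀ u v : V, u ≠ v → ∃ w, G.Adj u w ∧ G.Adj v w)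
    (hP' : ∀ u v : V, u ≠ v → ∃ w, Gᶜ.Adj u w ∧ Gᶜ.Adj v w)
    (hcard : 2 ≤ Fintype.card V) (v : V) : 3 ≤ G.degree v := by
  by_contra hlt
  push_neg at hlt
  have hnt : Nontrivial V := Fintype.one_lt_card_iff_nontrivial.mp (by omega)
  obtain ⟨u, hu⟩ := exists_ne v
  obtain ⟨a, hva, -⟩ := hP v u (Ne.symm hu)
  obtain ⟨b, hvb, hab'⟩ := hP v a hva.ne
  have hNsub : ({a, b} : Finset V) ⊆ G.neighborFinset v := by
    intro x hx
    simp only [mem_insert, mem_singleton] at hx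
    rcases hx with rfl | rfl <;> simp [mem_neighborFinset, hva, hvb]
  have hN : G.neighborFinset v = {a, b} := by
    refine (eq_of_subset_of_card_le hNsub ?_).symm
    rw [card_neighborFinset_eq_degree, card_pair hab'.ne]
    omega
  have hmem : ∀ w, G.Adj v w → w = a ∨ w = b := by
    intro w hw
    have : w ∈ G.neighborFinset v := (mem_neighborFinset _ _ _).mpr hw
    rw [hN] at this
    simpa using this
  obtain ⟨w, hw1, hw2⟩ := hP' a b hab'.ne
  rw [compl_adj] at hw1 hw2
  have hwv : w ≠ v := by rintro rfl; exact hw1.2 hva.symm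
  obtain ⟨z, hvz, hwz⟩ := hP v w (Ne.symm hwv)
  rcases hmem z hvz with rfl | rfl
  · exact hw1.2 hwz.symm
  · exact hw2.2 hwz.symm

/-- Covering bound: if every two distinct vertices have a common neighbor and `v`
has degree 3, then the sum of `(deg w - 1)` over neighbors `w` of `v` is at least
the number of vertices. -/
lemma cover_sum_aux {V : Type*} [Fintype V] [DecidableEq V] (G : SimpleGraph V)
    [DecidableRel G.Adj]
    (hP : ∀ u v : V, u ≠ v → ∃ w, G.Adj u w ∧ G.Adj v w)
    (v : V) (hdeg : G.degree v = 3) :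
    Fintype.card V ≤ ∑ w ∈ G.neighborFinset v, (G.degree w - 1) := by
  set N := G.neighborFinset v with hNdef
  have hNadj : ∀ x, x ∈ N → G.Adj v x := fun x hx => (mem_neighborFinset _ _ _).mp hx
  have key : ∀ w ∈ N, G.degree w - 1 = ((univ.erase v).filter (fun u => G.Adj w u)).card := by
    intro w hw
    have hvw : v ∈ G.neighborFinset w := (mem_neighborFinset _ _ _).mpr (hNadj w hw).symm
    have : (univ.erase v).filter (fun u => G.Adj w u) = (G.neighborFinset w).erase v := by
      ext u
      simp [mem_erase, mem_neighborFinset, and_comm]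
    rw [this, card_erase_of_mem hvw, card_neighborFinset_eq_degree]
  rw [Finset.sum_congr rfl key]
  have hdc : ∑ w ∈ N, ((univ.erase v).filter (fun u => G.Adj w u)).card
      = ∑ u ∈ univ.erase v, (N.filter (fun w => G.Adj w u)).card := by
    simp only [Finset.card_filter]
    exact Finset.sum_comm
  rw [hdc]
  have cov : ∀ u, u ≠ v → ∃ w ∈ N, G.Adj w u := by
    intro u hu
    obtain ⟨w, h1, h2⟩ := hP v u (Ne.symm hu)
    exact ⟨w, (mem_neighborFinset _ _ _).mpr h1, h2.symm⟩
  have h1le : ∀ u ∈ univ.erase v, 1 ≤ (N.filter (fun w => G.Adj w u)).card := by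
    intro u hu
    obtain ⟨w, hwN, hwu⟩ := cov u (mem_erase.mp hu).1
    exact card_pos.mpr ⟨w, mem_filter.mpr ⟨hwN, hwu⟩⟩
  have hN3 : N.card = 3 := hdeg
  obtain ⟨a, b, c, hab, hac, hbc, hNabc⟩ := Finset.card_eq_three.mp hN3
  have haN : a ∈ N := by rw [hNabc]; simp
  have hbN : b ∈ N := by rw [hNabc]; simp
  have hcN : c ∈ N := by rw [hNabc]; simp
  have hmemN : ∀ t, t ∈ N → t = a ∨ t = b ∨ t = c := by
    intro t ht; rw [hNabc] at ht; simpa using ht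
  have hstrict : ∃ u0 ∈ univ.erase v, 1 < (N.filter (fun w => G.Adj w u0)).card := by
    have two_mem : ∀ (u0 p q : V), u0 ∈ N → p ∈ N → q ∈ N → p ≠ q →
        G.Adj p u0 → G.Adj q u0 →
        ∃ u0 ∈ univ.erase v, 1 < (N.filter (fun w => G.Adj w u0)).card := by
      intro u0 p q hu0 hp hq hpq hpu hqu
      refine ⟨u0, mem_erase.mpr ⟨(hNadj u0 hu0).ne', mem_univ _⟩, ?_⟩
      exact Finset.one_lt_card.mpr ⟨p, mem_filter.mpr ⟨hp, hpu⟩, q, mem_filter.mpr ⟨hq, hqu⟩, hpq⟩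
    obtain ⟨w1, hw1N, hw1a⟩ := cov a (hNadj a haN).ne'
    have hw1ne : w1 ≠ a := hw1a.ne
    rcases hmemN w1 hw1N with h | h | h <;> rw [h] at hw1a hw1ne
    · exact absurd rfl hw1ne
    · -- edge b-a ; cover c
      obtain ⟨x, hxN, hxc⟩ := cov c (hNadj c hcN).ne'
      have hxne : x ≠ c := hxc.ne
      rcases hmemN x hxN with h2 | h2 | h2 <;> rw [h2] at hxc hxne
      · exact two_mem a b c haN hbN hcN hbc hw1a hxc.symm
      · exact two_mem b a c hbN haN hcN hac hw1a.symm hxc.symm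
      · exact absurd rfl hxne
    · -- edge c-a ; cover b
      obtain ⟨x, hxN, hxb⟩ := cov b (hNadj b hbN).ne'
      have hxne : x ≠ b := hxb.ne
      rcases hmemN x hxN with h2 | h2 | h2 <;> rw [h2] at hxb hxne
      · exact two_mem a c b haN hcN hbN (Ne.symm hbc) hw1a hxb.symm
      · exact absurd rfl hxne
      · exact two_mem c a b hcN haN hbN hab hw1a.symm hxb.symm
  obtain ⟨u0, hu0, hu0lt⟩ := hstrict
  have hlt : ∑ u ∈ univ.erase v, (1 : ℕ)
      < ∑ u ∈ univ.erase v, (N.filter (fun w => G.Adj w u)).card :=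
    Finset.sum_lt_sum h1le ⟨u0, hu0, hu0lt⟩
  rw [Finset.sum_const, smul_eq_mul, mul_one, card_erase_of_mem (mem_univ v), card_univ] at hlt
  have : 1 ≤ Fintype.card V := Fintype.card_pos_iff.mpr ⟨v⟩
  omega

/-- On 8 vertices with all degrees 3 or 4, a degree-3 vertex has at least
two degree-4 neighbors. -/
lemma two_nbrs_deg4_aux {V : Type*} [Fintype V] [DecidableEq V] (G : SimpleGraph V)
    [DecidableRel G.Adj]
    (hP : ∀ u v : V, u ≠ v → ∃ w, G.Adj u w ∧ G.Adj v w)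
    (hdeg34 : ∀ w : V, G.degree w = 3 ∨ G.degree w = 4) (h8 : Fintype.card V = 8)
    (v : V) (hv : G.degree v = 3) :
    2 ≤ ((G.neighborFinset v).filter (fun w => G.degree w = 4)).card := by
  have hcs := cover_sum_aux G hP v hv
  rw [h8] at hcs
  set N := G.neighborFinset v with hN
  have hsplit := Finset.sum_filter_add_sum_filter_not N (fun w => G.degree w = 4)
    (fun w => G.degree w - 1)
  have e1 : ∑ w ∈ N.filter (fun w => G.degree w = 4), (G.degree w - 1)
      = 3 * (N.filter (fun w => G.degree w = 4)).card := by
    rw [Finset.sum_congr rfl (fun w hw => by rw [(mem_filter.mp hw).2] :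
      ∀ w ∈ N.filter (fun w => G.degree w = 4), G.degree w - 1 = 3), sum_const,
      smul_eq_mul, mul_comm]
  have e2 : ∑ w ∈ N.filter (fun w => ¬ G.degree w = 4), (G.degree w - 1)
      = 2 * (N.filter (fun w => ¬ G.degree w = 4)).card := by
    rw [Finset.sum_congr rfl (fun w hw => by
        rcases hdeg34 w with h | h
        · rw [h]
        · exact absurd h (mem_filter.mp hw).2 :
      ∀ w ∈ N.filter (fun w => ¬ G.degree w = 4), G.degree w - 1 = 2), sum_const,
      smul_eq_mul, mul_comm]
  have hcards : (N.filter (fun w => G.degree w = 4)).card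
      + (N.filter (fun w => ¬ G.degree w = 4)).card = 3 := by
    rw [card_filter_add_card_filter_not]
    exact hv
  rw [e1, e2] at hsplit
  omega

/-- The central combinatorial fact: on fewer than 9 (and at least 2) vertices it is
impossible that both `G` and `Gᶜ` have the property that every two distinct
vertices have a common neighbor. -/
lemma key_lemma {V : Type*} [Fintype V] (G : SimpleGraph V)
    (h1 : 1 < Fintype.card V) (h2 : Fintype.card V < 9)
    (hP : ∀ u v : V, u ≠ v → ∃ w, G.Adj u w ∧ G.Adj v w)
    (hP' : ∀ u v : V, u ≠ v → ∃ w, Gᶜ.Adj u w ∧ Gᶜ.Adj v w) : False := by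
  classical
  have hPc : ∀ u v : V, u ≠ v → ∃ w, Gᶜᶜ.Adj u w ∧ Gᶜᶜ.Adj v w := by
    simpa [compl_compl] using hP
  have hd3 : ∀ v, 3 ≤ G.degree v := deg_ge_three_aux G hP hP' (by omega)
  have hd3' : ∀ v, 3 ≤ Gᶜ.degree v := deg_ge_three_aux Gᶜ hP' hPc (by omega)
  have hdco : ∀ v : V, Gᶜ.degree v = Fintype.card V - 1 - G.degree v :=
    fun v => degree_compl G v
  have hdlt : ∀ v, G.degree v < Fintype.card V := fun v => G.degree_lt_card_verts v
  obtain ⟨v0⟩ : Nonempty V := Fintype.card_pos_iff.mp (by omega)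
  have h7 : 7 ≤ Fintype.card V := by
    have := hd3 v0; have := hd3' v0; have := hdco v0; have := hdlt v0; omega
  rcases (by omega : Fintype.card V = 7 ∨ Fintype.card V = 8) with h7' | h8
  · -- n = 7 : all degrees 3, parity contradiction
    have hall : ∀ v, G.degree v = 3 := by
      intro v; have := hd3 v; have := hd3' v; have := hdco v; have := hdlt v; omega
    have hsum := G.sum_degrees_eq_twice_card_edges
    rw [Finset.sum_congr rfl (fun v _ => hall v), Finset.sum_const, card_univ, h7',
      smul_eq_mul] at hsum
    omega
  · -- n = 8
    have hdeg34 : ∀ v, G.degree v = 3 ∨ G.degree v = 4 := by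
      intro v; have := hd3 v; have := hd3' v; have := hdco v; have := hdlt v; omega
    set T := univ.filter (fun v : V => G.degree v = 3) with hT
    set D := univ.filter (fun v : V => ¬ G.degree v = 3) with hD
    have hTD : T.card + D.card = 8 := by
      rw [hT, hD, card_filter_add_card_filter_not, card_univ, h8]
    have hDdeg : ∀ d ∈ D, G.degree d = 4 := by
      intro d hd
      have hne3 := (mem_filter.mp hd).2
      rcases hdeg34 d with h | h
      · exact absurd h hne3
      · exact h
    have hlow : ∀ t ∈ T, 2 ≤ (D.filter (fun d => G.Adj t d)).card := by
      intro t ht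
      have hdt : G.degree t = 3 := (mem_filter.mp ht).2
      have h2 := two_nbrs_deg4_aux G hP hdeg34 h8 t hdt
      have heq : (G.neighborFinset t).filter (fun w => G.degree w = 4)
          = D.filter (fun d => G.Adj t d) := by
        ext w
        simp only [mem_filter, mem_neighborFinset, hD, mem_univ, true_and]
        have := hdeg34 w
        constructor
        · rintro ⟨ha, hd⟩; exact ⟨by omega, ha⟩
        · rintro ⟨hd, ha⟩; exact ⟨ha, by omega⟩
      rwa [heq] at h2
    have hup : ∀ d ∈ D, (T.filter (fun t => G.Adj d t)).card + 2 ≤ T.card := by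
      intro d hd
      have hdeg34c : ∀ w : V, Gᶜ.degree w = 3 ∨ Gᶜ.degree w = 4 := by
        intro w; have := hdco w; have := hdeg34 w; omega
      have hdc3 : Gᶜ.degree d = 3 := by
        have := hdco d; have := hDdeg d hd; omega
      have h2 := two_nbrs_deg4_aux Gᶜ hP' hdeg34c h8 d hdc3
      have hsub : (Gᶜ.neighborFinset d).filter (fun w => Gᶜ.degree w = 4)
          ⊆ T.filter (fun t => ¬ G.Adj d t) := by
        intro w hw
        obtain ⟨hw1, hw2⟩ := mem_filter.mp hw
        rw [mem_neighborFinset, compl_adj] at hw1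
        refine mem_filter.mpr ⟨mem_filter.mpr ⟨mem_univ w, ?_⟩, hw1.2⟩
        have := hdco w; omega
      have h2' : 2 ≤ (T.filter (fun t => ¬ G.Adj d t)).card :=
        le_trans h2 (card_le_card hsub)
      have := card_filter_add_card_filter_not (s := T) (p := fun t => G.Adj d t)
      omega
    have hI : ∑ t ∈ T, (D.filter (fun d => G.Adj t d)).card
        = ∑ d ∈ D, (T.filter (fun t => G.Adj d t)).card := by
      simp only [Finset.card_filter]
      rw [Finset.sum_comm]
      exact Finset.sum_congr rfl fun d _ => Finset.sum_congr rfl fun t _ => by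
        rw [G.adj_comm]
    set I := ∑ t ∈ T, (D.filter (fun d => G.Adj t d)).card with hIdef
    have hIlow : 2 * T.card ≤ I := by
      calc 2 * T.card = ∑ _t ∈ T, 2 := by rw [sum_const, smul_eq_mul, mul_comm]
      _ ≤ I := Finset.sum_le_sum hlow
    have hIup : I + 2 * D.card ≤ T.card * D.card := by
      have hs := Finset.sum_le_sum hup
      rw [Finset.sum_add_distrib, Finset.sum_const, Finset.sum_const, smul_eq_mul,
        smul_eq_mul] at hs
      rw [hI]
      calc ∑ d ∈ D, (T.filter (fun t => G.Adj d t)).card + 2 * D.card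
          = ∑ d ∈ D, (T.filter (fun t => G.Adj d t)).card + D.card * 2 := by ring
        _ ≤ D.card * T.card := hs
        _ = T.card * D.card := by ring
    have h44 : T.card = 4 ∧ D.card = 4 ∧ I = 8 := by
      have hy8 : T.card ≤ 8 := by omega
      interval_cases h : T.card <;> omega
    obtain ⟨hy4, hz4, hI8⟩ := h44
    have hex_t : ∀ t ∈ T, (D.filter (fun d => G.Adj t d)).card = 2 := by
      intro t ht
      by_contra hne
      have h2lt : 2 < (D.filter (fun d => G.Adj t d)).card :=
        lt_of_le_of_ne (hlow t ht) (Ne.symm hne)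
      have hstrict := Finset.sum_lt_sum hlow ⟨t, ht, h2lt⟩
      rw [sum_const, smul_eq_mul, hy4, ← hIdef, hI8] at hstrict
      omega
    have hex_d : ∀ d ∈ D, (T.filter (fun t => G.Adj d t)).card = 2 := by
      intro d hd
      by_contra hne
      have hle : ∀ e ∈ D, (T.filter (fun t => G.Adj e t)).card ≤ 2 := by
        intro e he; have := hup e he; omega
      have hlt : (T.filter (fun t => G.Adj d t)).card < 2 :=
        lt_of_le_of_ne (hle d hd) hne
      have hstrict := Finset.sum_lt_sum hle ⟨d, hd, hlt⟩
      rw [sum_const, smul_eq_mul, hz4, ← hI] at hstrict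
      omega
    have hTnbr : ∀ t ∈ T, (T.filter (fun s => G.Adj t s)).card = 1 := by
      intro t ht
      have hdt : G.degree t = 3 := (mem_filter.mp ht).2
      have hsplit : ((G.neighborFinset t).filter (fun w => G.degree w = 3)).card +
          ((G.neighborFinset t).filter (fun w => ¬ G.degree w = 3)).card = 3 := by
        rw [card_filter_add_card_filter_not, card_neighborFinset_eq_degree, hdt]
      have e1 : (G.neighborFinset t).filter (fun w => G.degree w = 3)
          = T.filter (fun s => G.Adj t s) := by
        ext w
        simp only [mem_filter, mem_neighborFinset, hT, mem_univ, true_and]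
        tauto
      have e2 : (G.neighborFinset t).filter (fun w => ¬ G.degree w = 3)
          = D.filter (fun d => G.Adj t d) := by
        ext w
        simp only [mem_filter, mem_neighborFinset, hD, mem_univ, true_and]
        tauto
      rw [e1, e2, hex_t t ht] at hsplit
      omega
    have hTne : T.Nonempty := card_pos.mp (by omega)
    obtain ⟨t1, ht1⟩ := hTne
    obtain ⟨t2, ht2eq⟩ := Finset.card_eq_one.mp (hTnbr t1 ht1)
    have ht2mem : t2 ∈ T ∧ G.Adj t1 t2 := by
      have h := ht2eq ▸ mem_singleton_self t2
      exact mem_filter.mp h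
    obtain ⟨t1', ht1'eq⟩ := Finset.card_eq_one.mp (hTnbr t2 ht2mem.1)
    have ht1'val : t1 = t1' := by
      have h : t1 ∈ T.filter (fun s => G.Adj t2 s) := mem_filter.mpr ⟨ht1, ht2mem.2.symm⟩
      rw [ht1'eq] at h
      exact mem_singleton.mp h
    obtain ⟨dA, dB, hdAB, hDeq⟩ := Finset.card_eq_two.mp (hex_t t1 ht1)
    have hdAmem : dA ∈ D ∧ G.Adj t1 dA := by
      have h : dA ∈ D.filter (fun d => G.Adj t1 d) := by rw [hDeq]; simp
      exact mem_filter.mp h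
    have hdBmem : dB ∈ D ∧ G.Adj t1 dB := by
      have h : dB ∈ D.filter (fun d => G.Adj t1 d) := by rw [hDeq]; simp
      exact mem_filter.mp h
    have hclaim : ∀ t ∈ T, G.Adj dA t ∨ G.Adj dB t := by
      intro t ht
      by_cases htt1 : t = t1
      · subst htt1; left; exact hdAmem.2.symm
      · obtain ⟨w, hw1, hw2⟩ := hP t1 t (fun h => htt1 h.symm)
        rcases hdeg34 w with hw3 | hw4
        · have hmem : w ∈ T.filter (fun s => G.Adj t1 s) :=
            mem_filter.mpr ⟨mem_filter.mpr ⟨mem_univ w, hw3⟩, hw1⟩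
          rw [ht2eq] at hmem
          have hwt2 : w = t2 := mem_singleton.mp hmem
          subst hwt2
          have hmem2 : t ∈ T.filter (fun s => G.Adj w s) := mem_filter.mpr ⟨ht, hw2.symm⟩
          rw [ht1'eq] at hmem2
          exact absurd ((mem_singleton.mp hmem2).trans ht1'val.symm) htt1
        · have hmem : w ∈ D.filter (fun d => G.Adj t1 d) := by
            refine mem_filter.mpr ⟨mem_filter.mpr ⟨mem_univ w, ?_⟩, hw1⟩
            omega
          rw [hDeq] at hmem
          rcases mem_insert.mp hmem with h | h
          · left; rw [← h]; exact hw2.symm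
          · right; rw [← mem_singleton.mp h]; exact hw2.symm
    set A := T.filter (fun t => G.Adj dA t) with hA
    set B := T.filter (fun t => G.Adj dB t) with hB
    have hA2 : A.card = 2 := hex_d dA hdAmem.1
    have hB2 : B.card = 2 := hex_d dB hdBmem.1
    have hsub : T ⊆ A ∪ B := by
      intro t ht
      rcases hclaim t ht with h | h
      · exact mem_union_left _ (mem_filter.mpr ⟨ht, h⟩)
      · exact mem_union_right _ (mem_filter.mpr ⟨ht, h⟩)
    have ht1AB : t1 ∈ A ∩ B := mem_inter.mpr
      ⟨mem_filter.mpr ⟨ht1, hdAmem.2.symm⟩, mem_filter.mpr ⟨ht1, hdBmem.2.symm⟩⟩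
    have hcui := Finset.card_union_add_card_inter A B
    have hABle : T.card ≤ (A ∪ B).card := card_le_card hsub
    have hinter : 1 ≤ (A ∩ B).card := card_pos.mpr ⟨t1, ht1AB⟩
    omega

theorem chiInj_add_lt_of_small {V : Type*} [Fintype V] (G : SimpleGraph V)
    (h1 : 1 < Fintype.card V) (h2 : Fintype.card V < 9) :
    chiInj G + chiInj Gᶜ < 2 * (Fintype.card V : ℕ∞) := by
  classical
  have key2 : ∀ (H K : SimpleGraph V) (u v : V), u ≠ v → (∀ w, ¬(K.Adj u w ∧ K.Adj v w)) →
      chiInj H + chiInj K < 2 * (Fintype.card V : ℕ∞) := by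
    intro H K u v hne hno
    have hnadj : ¬ (commonNbrGraph K).Adj u v := by
      rintro ⟨-, w, hw1, hw2⟩
      exact hno w ⟨hw1, hw2⟩
    have hH : chiInj H ≤ ((Fintype.card V : ℕ) : ℕ∞) :=
      (colorable_of_fintype (commonNbrGraph H)).chromaticNumber_le
    have hK : chiInj K ≤ ((Fintype.card V - 1 : ℕ) : ℕ∞) :=
      chrom_le_pred_aux (commonNbrGraph K) hne hnadj
    have hsum : chiInj H + chiInj K
        ≤ ((Fintype.card V : ℕ) : ℕ∞) + ((Fintype.card V - 1 : ℕ) : ℕ∞) :=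
      add_le_add hH hK
    refine lt_of_le_of_lt hsum ?_
    have hcast : ((Fintype.card V : ℕ) : ℕ∞) + ((Fintype.card V - 1 : ℕ) : ℕ∞)
        = ((Fintype.card V + (Fintype.card V - 1) : ℕ) : ℕ∞) := by
      push_cast
      ring
    have hcast2 : 2 * ((Fintype.card V : ℕ) : ℕ∞) = ((2 * Fintype.card V : ℕ) : ℕ∞) := by
      push_cast
      ring
    rw [hcast, hcast2]
    exact_mod_cast (show Fintype.card V + (Fintype.card V - 1) < 2 * Fintype.card V by omega)
  by_cases hQ : ∀ u v : V, u ≠ v → ∃ w, G.Adj u w ∧ G.Adj v w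
  · have hQ' : ¬ ∀ u v : V, u ≠ v → ∃ w, Gᶜ.Adj u w ∧ Gᶜ.Adj v w :=
      fun h => key_lemma G h1 h2 hQ h
    push_neg at hQ'
    obtain ⟨u, v, hne, hno⟩ := hQ'
    exact key2 G Gᶜ u v hne (fun w hw => hno w hw.1 hw.2)
  · push_neg at hQ
    obtain ⟨u, v, hne, hno⟩ := hQ
    have := key2 Gᶜ G u v hne (fun w hw => hno w hw.1 hw.2)
    rwa [add_comm] at this
end

section
/- For every integer n ≥ 5 there exists a finite simple graph G of order n such that any two distinct vertices of G are at distance at most 2 in G and any two distinct vertices of Ḡ are at distance at most 2 in Ḡ; consequently χ(G²) + χ(Ḡ²) = 2n and χ(G²) · χ(Ḡ²) = n². -/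
open SimpleGraph

/-- The square of `G`: two distinct vertices are adjacent iff their distance
in `G` is at most 2 (i.e. they are adjacent or at distance exactly 2). -/
def squareGraph {V : Type*} (G : SimpleGraph V) : SimpleGraph V where
  Adj u v := G.Adj u v ∨ G.dist u v = 2
  symm := by
    constructor
    rintro u v (h | h)
    · exact Or.inl h.symm
    · exact Or.inr (by rwa [SimpleGraph.dist_comm])
  loopless := by
    constructor
    rintro v (h | h)
    · exact G.irrefl h
    · simp [SimpleGraph.dist_self] at h

/-- Adjacency relation of the extremal graph `F_n`: a 5-cycle `0 1 2 3 4`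
together with extra vertices `≥ 5` all joined to `0` and `2`. -/
def FRel (a b : ℕ) : Prop :=
  (a < 5 ∧ b < 5 ∧ (b = a + 1 ∨ a = b + 1 ∨ (a = 0 ∧ b = 4) ∨ (a = 4 ∧ b = 0))) ∨
  (5 ≤ a ∧ (b = 0 ∨ b = 2)) ∨ (5 ≤ b ∧ (a = 0 ∨ a = 2))

/-- Any two distinct nonadjacent vertices of `F_n` have a common neighbor among
the cycle vertices. -/
lemma pick_spec {a b : ℕ} (hab : a ≠ b) (h : ¬ FRel a b) :
    ∃ c, FRel a c ∧ FRel c b ∧ c < 5 := by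
  unfold FRel at *
  by_cases ha : 5 ≤ a
  · by_cases hb : 5 ≤ b
    · exact ⟨0, by omega, by omega, by omega⟩
    · replace hb : b < 5 := by omega
      clear hab
      interval_cases b <;>
        first
          | exact (h (by omega)).elim
          | exact ⟨0, by omega, by omega, by omega⟩
          | exact ⟨2, by omega, by omega, by omega⟩
  · by_cases hb : 5 ≤ b
    · replace ha : a < 5 := by omega
      clear hab
      interval_cases a <;>
        first
          | exact (h (by omega)).elim
          | exact ⟨0, by omega, by omega, by omega⟩
          | exact ⟨2, by omega, by omega, by omega⟩
    · replace ha : a < 5 := by omega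
      replace hb : b < 5 := by omega
      interval_cases a <;> interval_cases b <;>
        first
          | exact (hab rfl).elim
          | exact (h (by omega)).elim
          | exact ⟨0, by omega, by omega, by omega⟩
          | exact ⟨1, by omega, by omega, by omega⟩
          | exact ⟨2, by omega, by omega, by omega⟩
          | exact ⟨3, by omega, by omega, by omega⟩
          | exact ⟨4, by omega, by omega, by omega⟩

/-- Any two adjacent vertices of `F_n` have a common non-neighbor among
the cycle vertices. -/
lemma pickC_spec {a b : ℕ} (h : FRel a b) :
    ∃ c, c ≠ a ∧ c ≠ b ∧ ¬ FRel a c ∧ ¬ FRel c b ∧ c < 5 := by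
  unfold FRel at *
  by_cases ha : 5 ≤ a
  · by_cases hb : 5 ≤ b
    · exact (by omega : False).elim
    · replace hb : b < 5 := by omega
      interval_cases b <;>
        first
          | exact (by omega : False).elim
          | exact ⟨3, by omega, by omega, by omega, by omega, by omega⟩
          | exact ⟨4, by omega, by omega, by omega, by omega, by omega⟩
  · by_cases hb : 5 ≤ b
    · replace ha : a < 5 := by omega
      interval_cases a <;>
        first
          | exact (by omega : False).elim
          | exact ⟨3, by omega, by omega, by omega, by omega, by omega⟩
          | exact ⟨4, by omega, by omega, by omega, by omega, by omega⟩
    · replace ha : a < 5 := by omega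
      replace hb : b < 5 := by omega
      interval_cases a <;> interval_cases b <;>
        first
          | exact (by omega : False).elim
          | exact ⟨0, by omega, by omega, by omega, by omega, by omega⟩
          | exact ⟨1, by omega, by omega, by omega, by omega, by omega⟩
          | exact ⟨2, by omega, by omega, by omega, by omega, by omega⟩
          | exact ⟨3, by omega, by omega, by omega, by omega, by omega⟩
          | exact ⟨4, by omega, by omega, by omega, by omega, by omega⟩

/-- If two distinct nonadjacent vertices have a common neighbor then they are at
distance exactly `2`. -/
lemma dist_eq_two_of {V : Type*} {G : SimpleGraph V} {u v w : V} (huv : u ≠ v)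
    (hn : ¬ G.Adj u v) (h1 : G.Adj u w) (h2 : G.Adj w v) : G.dist u v = 2 := by
  have hle : G.dist u v ≤ 2 := by
    simpa using G.dist_le (Walk.cons h1 (Walk.cons h2 Walk.nil))
  have h0 : G.dist u v ≠ 0 := by
    intro h
    rw [SimpleGraph.dist_eq_zero_iff_eq_or_not_reachable] at h
    rcases h with h | h
    · exact huv h
    · exact h ⟨Walk.cons h1 (Walk.cons h2 Walk.nil)⟩
  have h1' : G.dist u v ≠ 1 := by
    intro h
    rw [SimpleGraph.dist_eq_one_iff_adj] at h
    exact hn h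
  omega

theorem exists_square_chromatic_extremal (n : ℕ) (hn : 5 ≤ n) :
    ∃ G : SimpleGraph (Fin n),
      (∀ u v : Fin n, u ≠ v → (G.Adj u v ∨ G.dist u v = 2)) ∧
      (∀ u v : Fin n, u ≠ v → (Gᶜ.Adj u v ∨ Gᶜ.dist u v = 2)) ∧
      (squareGraph G).chromaticNumber + (squareGraph Gᶜ).chromaticNumber = 2 * (n : ℕ∞) ∧
      (squareGraph G).chromaticNumber * (squareGraph Gᶜ).chromaticNumber = (n : ℕ∞) ^ 2 := by
  set G : SimpleGraph (Fin n) :=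
    { Adj := fun u v => FRel u.val v.val
      symm := by constructor; intro u v h; unfold FRel at *; omega
      loopless := by constructor; intro v h; unfold FRel at *; omega } with hG
  have hAdj : ∀ u v : Fin n, G.Adj u v ↔ FRel u.val v.val := fun _ _ => Iff.rfl
  have hd1 : ∀ u v : Fin n, u ≠ v → (G.Adj u v ∨ G.dist u v = 2) := by
    intro u v huv
    by_cases h : G.Adj u v
    · exact Or.inl h
    · right
      have hval : u.val ≠ v.val := fun h' => huv (Fin.ext h')
      obtain ⟨c, h1, h2, h5⟩ := pick_spec hval h
      exact dist_eq_two_of huv h ((hAdj u ⟨c, by omega⟩).mpr h1)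
        ((hAdj ⟨c, by omega⟩ v).mpr h2)
  have hd2 : ∀ u v : Fin n, u ≠ v → (Gᶜ.Adj u v ∨ Gᶜ.dist u v = 2) := by
    intro u v huv
    by_cases h : Gᶜ.Adj u v
    · exact Or.inl h
    · right
      have hr : FRel u.val v.val := by
        by_contra hr
        exact h ⟨huv, hr⟩
      obtain ⟨c, hne1, hne2, hn1, hn2, h5⟩ := pickC_spec hr
      set w : Fin n := ⟨c, by omega⟩ with hw
      have hadj1 : Gᶜ.Adj u w := ⟨fun h' => hne1 (congrArg Fin.val h'.symm), hn1⟩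
      have hadj2 : Gᶜ.Adj w v := ⟨fun h' => hne2 (congrArg Fin.val h'), hn2⟩
      exact dist_eq_two_of huv h hadj1 hadj2
  have key : ∀ (H : SimpleGraph (Fin n)),
      (∀ u v : Fin n, u ≠ v → (H.Adj u v ∨ H.dist u v = 2)) → squareGraph H = ⊤ := by
    intro H hH
    ext u v
    constructor
    · intro h
      exact (squareGraph H).ne_of_adj h
    · intro h
      exact hH u v h
  have e1 : squareGraph G = ⊤ := key G hd1
  have e2 : squareGraph Gᶜ = ⊤ := key Gᶜ hd2
  have hc : (⊤ : SimpleGraph (Fin n)).chromaticNumber = (n : ℕ∞) := by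
    rw [SimpleGraph.chromaticNumber_top]
    simp
  refine ⟨G, hd1, hd2, ?_, ?_⟩
  · rw [e1, e2, hc]; ring
  · rw [e1, e2, hc]; ring
end
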